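/- arXiv:2112.13881 — 4 statements merged into one kernel-verified Lean document; each statement's English description precedes it below -/
import Mathlib

section
/- If f : ℝ^d → [0,∞) and s > 0, then ∫_{ℝ^d} f(x) dx = (s/2) ∫_{K_s(f)} |⟨e_{d+1}, x⟩|^{s-1} dλ_{d+1}(x), where K_s(f) is the s-lifting of f. -/
open MeasureTheory Set

/-- The `s`-lifting of a nonnegative function on `ℝ^d`, as a subset of `ℝ^d × ℝ`. -/
noncomputable def sLift {d : ℕ} (s : ℝ) (f : EuclideanSpace ℝ (Fin d) → ℝ) :
    Set (EuclideanSpace ℝ (Fin d) × ℝ) :=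
  {p | p.1 ∈ closure (Function.support f) ∧ |p.2| ≤ f p.1 ^ (1 / s)}


lemma myII (s a : ℝ) (hs : 0 < s) (ha : 0 ≤ a) :
    IntervalIntegrable (fun t : ℝ => |t| ^ (s - 1)) volume 0 a := by
  have h1 : IntervalIntegrable (fun t : ℝ => t ^ (s - 1)) volume 0 a :=
    intervalIntegral.intervalIntegrable_rpow' (by linarith)
  refine h1.congr ?_
  intro t ht
  rw [uIoc_of_le ha] at ht
  show t ^ (s - 1) = |t| ^ (s - 1)
  rw [abs_of_nonneg ht.1.le]

lemma myII' (s a : ℝ) (hs : 0 < s) (ha : 0 ≤ a) :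
    IntervalIntegrable (fun t : ℝ => |t| ^ (s - 1)) volume (-a) 0 := by
  have := ((IntervalIntegrable.iff_comp_neg (h := enorm_ne_top)).mp (myII s a hs ha)).symm
  simpa using this

lemma myVal (s a : ℝ) (hs : 0 < s) (ha : 0 ≤ a) :
    ∫ t in (-a)..a, |t| ^ (s - 1) = 2 * a ^ s / s := by
  have h0 : ∫ t in (0:ℝ)..a, |t| ^ (s - 1) = a ^ s / s := by
    rw [intervalIntegral.integral_congr (g := fun t : ℝ => t ^ (s - 1))
      (fun x hx => by
        rw [uIcc_of_le ha] at hx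
        exact by rw [abs_of_nonneg hx.1]),
      integral_rpow (Or.inl (by linarith))]
    rw [sub_add_cancel, Real.zero_rpow hs.ne', sub_zero]
  have hneg : ∫ t in (-a)..(0:ℝ), |t| ^ (s - 1) = a ^ s / s := by
    have := intervalIntegral.integral_comp_neg (a := 0) (b := a)
      (f := fun t : ℝ => |t| ^ (s - 1))
    simp only [abs_neg, neg_zero] at this
    rw [← this, h0]
  rw [← intervalIntegral.integral_add_adjacent_intervals (myII' s a hs ha) (myII s a hs ha),
    hneg, h0]
  ring

lemma myB (s a : ℝ) (hs : 0 < s) (ha : 0 ≤ a) :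
    ∫⁻ t in {t : ℝ | |t| ≤ a}, ENNReal.ofReal (|t| ^ (s - 1)) =
      ENNReal.ofReal (2 / s) * ENNReal.ofReal (a ^ s) := by
  have hset : {t : ℝ | |t| ≤ a} = Icc (-a) a := by ext t; simp [abs_le]
  have hint : IntegrableOn (fun t : ℝ => |t| ^ (s - 1)) (Icc (-a) a) :=
    (intervalIntegrable_iff_integrableOn_Icc_of_le (by linarith)).mp
      ((myII' s a hs ha).trans (myII s a hs ha))
  rw [hset, ← ofReal_integral_eq_lintegral_ofReal hint
      (Filter.Eventually.of_forall fun t => Real.rpow_nonneg (abs_nonneg t) _)]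
  rw [integral_Icc_eq_integral_Ioc, ← intervalIntegral.integral_of_le (by linarith),
    myVal s a hs ha, show 2 * a ^ s / s = 2 / s * a ^ s by ring,
    ENNReal.ofReal_mul (by positivity)]


/-- `∫_{ℝ^d} f = (s/2) ∫_{K_s(f)} |⟨e_{d+1}, x⟩|^{s-1} dλ_{d+1}(x)`. -/
theorem integral_eq_sLift_integral (d : ℕ) (s : ℝ) (hs : 0 < s)
    (f : EuclideanSpace ℝ (Fin d) → ℝ) (hf : ∀ x, 0 ≤ f x) (hmeas : Measurable f) :
    ∫ x, f x = (s / 2) * ∫ p in sLift s f, |p.2| ^ (s - 1) := by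
  set C := closure (Function.support f) with hC
  have hCm : MeasurableSet C := isClosed_closure.measurableSet
  have hKm : MeasurableSet (sLift s f) := by
    have h1 : sLift s f = (Prod.fst ⁻¹' C) ∩ {p : EuclideanSpace ℝ (Fin d) × ℝ |
        |p.2| ≤ f p.1 ^ (1 / s)} := rfl
    rw [h1]
    exact (hCm.preimage measurable_fst).inter
      (measurableSet_le (measurable_snd.abs)
        ((hmeas.comp measurable_fst).pow measurable_const))
  have hgm : Measurable fun p : EuclideanSpace ℝ (Fin d) × ℝ =>
      ENNReal.ofReal (|p.2| ^ (s - 1)) :=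
    (measurable_snd.abs.pow measurable_const).ennreal_ofReal
  have key : ∫⁻ p in sLift s f, ENNReal.ofReal (|p.2| ^ (s - 1)) =
      ENNReal.ofReal (2 / s) * ∫⁻ x, ENNReal.ofReal (f x) := by
    rw [← lintegral_indicator hKm, Measure.volume_eq_prod,
      lintegral_prod _ ((hgm.indicator hKm).aemeasurable)]
    have hinner : ∀ x : EuclideanSpace ℝ (Fin d),
        (∫⁻ t, (sLift s f).indicator
            (fun p : EuclideanSpace ℝ (Fin d) × ℝ => ENNReal.ofReal (|p.2| ^ (s - 1))) (x, t))
          = ENNReal.ofReal (2 / s) * ENNReal.ofReal (f x) := by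
      intro x
      by_cases hx : x ∈ C
      · have heq : (fun t : ℝ => (sLift s f).indicator
            (fun p : EuclideanSpace ℝ (Fin d) × ℝ => ENNReal.ofReal (|p.2| ^ (s - 1))) (x, t))
            = fun t : ℝ => ({t : ℝ | |t| ≤ f x ^ (1 / s)}).indicator
              (fun t : ℝ => ENNReal.ofReal (|t| ^ (s - 1))) t := by
          funext t
          by_cases ht : |t| ≤ f x ^ (1 / s)
          · rw [indicator_of_mem (show (x, t) ∈ sLift s f from ⟨hx, ht⟩),
              indicator_of_mem (show t ∈ {t : ℝ | |t| ≤ f x ^ (1 / s)} from ht)]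
          · rw [indicator_of_notMem (show (x, t) ∉ sLift s f from fun h => ht h.2),
              indicator_of_notMem (show t ∉ {t : ℝ | |t| ≤ f x ^ (1 / s)} from ht)]
        have hsm : MeasurableSet {t : ℝ | |t| ≤ f x ^ (1 / s)} :=
          measurableSet_le measurable_abs measurable_const
        rw [heq, lintegral_indicator hsm, myB s _ hs (Real.rpow_nonneg (hf x) _),
          ← Real.rpow_mul (hf x), one_div, inv_mul_cancel₀ hs.ne', Real.rpow_one]
      · have h0 : (fun t : ℝ => (sLift s f).indicator
            (fun p : EuclideanSpace ℝ (Fin d) × ℝ => ENNReal.ofReal (|p.2| ^ (s - 1))) (x, t))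
            = fun _ : ℝ => (0 : ENNReal) := by
          funext t
          exact indicator_of_notMem (show (x, t) ∉ sLift s f from fun h => hx h.1) _
        have hfx : f x = 0 := by
          by_contra h
          exact hx (subset_closure (Function.mem_support.mpr h))
        rw [h0, lintegral_zero, hfx, ENNReal.ofReal_zero, mul_zero]
    rw [lintegral_congr hinner, lintegral_const_mul _ hmeas.ennreal_ofReal]
  have hL : ∫ x, f x = (∫⁻ x, ENNReal.ofReal (f x)).toReal :=
    integral_eq_lintegral_of_nonneg_ae (Filter.Eventually.of_forall hf)
      hmeas.aestronglyMeasurable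
  have hR : ∫ p in sLift s f, |p.2| ^ (s - 1)
      = (∫⁻ p in sLift s f, ENNReal.ofReal (|p.2| ^ (s - 1))).toReal :=
    integral_eq_lintegral_of_nonneg_ae
      (Filter.Eventually.of_forall fun p => Real.rpow_nonneg (abs_nonneg _) _)
      (measurable_snd.abs.pow measurable_const).aestronglyMeasurable
  rw [hL, hR, key, ENNReal.toReal_mul, ENNReal.toReal_ofReal (by positivity)]
  field_simp
end

section
/- Fix s > 0 and let K be a d-symmetric convex body in ℝ^{d+1} containing the origin in its interior. Then the function z ↦ (s/(2(d+s))) ∫_{S^d} |⟨e_{d+1}, u⟩|^{s-1} / h_{K-z}(u)^{d+s} dσ(u) is convex on the interior of K. -/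
open MeasureTheory Set Metric

/-- The support function of a set. -/
noncomputable def suppFn {d : ℕ} (K : Set (EuclideanSpace ℝ (Fin d)))
    (u : EuclideanSpace ℝ (Fin d)) : ℝ :=
  sSup ((fun x => (inner ℝ x u : ℝ)) '' K)

/-- `t ↦ t ^ (-p)` is convex on positives, inequality form. -/
theorem rpow_neg_convex_aux {p : ℝ} (hp : 0 ≤ p) {t t' a b : ℝ} (ht : 0 < t) (ht' : 0 < t')
    (ha : 0 ≤ a) (hb : 0 ≤ b) (hab : a + b = 1) :
    (a * t + b * t') ^ (-p) ≤ a * t ^ (-p) + b * t' ^ (-p) := by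
  have h1 : t ^ a * t' ^ b ≤ a * t + b * t' :=
    Real.geom_mean_le_arith_mean2_weighted ha hb ht.le ht'.le hab
  have hpos : (0:ℝ) < t ^ a * t' ^ b := by positivity
  have h2 : (a * t + b * t') ^ (-p) ≤ (t ^ a * t' ^ b) ^ (-p) :=
    Real.rpow_le_rpow_of_nonpos hpos h1 (by linarith)
  have h3 : (t ^ a * t' ^ b) ^ (-p) = (t ^ (-p)) ^ a * (t' ^ (-p)) ^ b := by
    rw [Real.mul_rpow (Real.rpow_nonneg ht.le a) (Real.rpow_nonneg ht'.le b),
      ← Real.rpow_mul ht.le, ← Real.rpow_mul ht'.le, mul_comm a (-p), mul_comm b (-p),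
      Real.rpow_mul ht.le, Real.rpow_mul ht'.le]
  have h4 : (t ^ (-p)) ^ a * (t' ^ (-p)) ^ b ≤ a * t ^ (-p) + b * t' ^ (-p) :=
    Real.geom_mean_le_arith_mean2_weighted ha hb (Real.rpow_nonneg ht.le _)
      (Real.rpow_nonneg ht'.le _) hab
  calc (a * t + b * t') ^ (-p) ≤ (t ^ a * t' ^ b) ^ (-p) := h2
    _ = (t ^ (-p)) ^ a * (t' ^ (-p)) ^ b := h3
    _ ≤ a * t ^ (-p) + b * t' ^ (-p) := h4

/-- `t ↦ |t| ^ c` is measurable. -/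
theorem measurable_abs_rpow (c : ℝ) : Measurable fun t : ℝ => |t| ^ c := by
  have heq : (fun t : ℝ => |t| ^ c)
      = fun t : ℝ => if t = 0 then (0:ℝ) ^ c else Real.exp (Real.log |t| * c) := by
    funext t
    by_cases h : t = 0
    · simp [h]
    · have habs : (0:ℝ) < |t| := abs_pos.2 h
      simp only [h, if_false]
      rw [Real.rpow_def_of_pos habs]
  rw [heq]
  exact Measurable.ite (measurableSet_eq_fun measurable_id measurable_const)
    measurable_const (((Real.measurable_log.comp measurable_abs).mul_const c).exp)

/-- For a `d`-symmetric convex body `K ⊆ ℝ^{d+1}` with the origin in its interior,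
the functional `z ↦ (s/(2(d+s))) ∫_{S^d} |⟨e_{d+1},u⟩|^{s-1} / h_{K-z}(u)^{d+s} dσ(u)`
is convex on the interior of `K`. -/
theorem convexOn_integral_sPolar (d : ℕ) (s : ℝ) (hs : 0 < s)
    (K : Set (EuclideanSpace ℝ (Fin (d + 1))))
    (hKcomp : IsCompact K) (hKconv : Convex ℝ K)
    (hKint : (0 : EuclideanSpace ℝ (Fin (d + 1))) ∈ interior K)
    (hsymm : ∀ x ∈ K,
      (WithLp.toLp 2 (fun i => if i = Fin.last d then -x i else x i) :
        EuclideanSpace ℝ (Fin (d + 1))) ∈ K) :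
    ConvexOn ℝ (interior K) (fun z =>
      (s / (2 * ((d : ℝ) + s))) *
        ∫ u : Metric.sphere (0 : EuclideanSpace ℝ (Fin (d + 1))) 1,
          |(inner ℝ (EuclideanSpace.single (Fin.last d) (1 : ℝ))
              (u : EuclideanSpace ℝ (Fin (d + 1))) : ℝ)| ^ (s - 1) /
            suppFn ((fun x => x - z) '' K) (u : EuclideanSpace ℝ (Fin (d + 1)))
              ^ ((d : ℝ) + s)
          ∂(volume : Measure (EuclideanSpace ℝ (Fin (d + 1)))).toSphere) := by
  classical
  set p : ℝ := (d : ℝ) + s with hpdef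
  have hp : 0 < p := by positivity
  set e : EuclideanSpace ℝ (Fin (d + 1)) := EuclideanSpace.single (Fin.last d) (1 : ℝ) with he
  set μ : Measure (Metric.sphere (0 : EuclideanSpace ℝ (Fin (d + 1))) 1) :=
    (volume : Measure (EuclideanSpace ℝ (Fin (d + 1)))).toSphere with hμ
  set c : ℝ := s / (2 * ((d : ℝ) + s)) with hcdef
  have hc : 0 ≤ c := by positivity
  have hKne : K.Nonempty := ⟨0, interior_subset hKint⟩
  have hbdd : ∀ u : EuclideanSpace ℝ (Fin (d + 1)),
      BddAbove ((fun x => (inner ℝ x u : ℝ)) '' K) := fun u =>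
    (hKcomp.image (continuous_id.inner continuous_const)).bddAbove
  -- translation formula
  have htrans : ∀ (z u : EuclideanSpace ℝ (Fin (d + 1))),
      suppFn ((fun x => x - z) '' K) u = suppFn K u - (inner ℝ z u : ℝ) := by
    intro z u
    have himg : (fun x => (inner ℝ x u : ℝ)) '' ((fun x => x - z) '' K)
        = (fun r => r - (inner ℝ z u : ℝ)) '' ((fun x => (inner ℝ x u : ℝ)) '' K) := by
      rw [Set.image_image, Set.image_image]
      exact Set.image_congr fun x _ => by rw [inner_sub_left]
    rw [suppFn, himg, suppFn]
    exact (Monotone.map_csSup_of_continuousAt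
      ((continuous_id.sub continuous_const).continuousAt)
      (fun a b hab => sub_le_sub_right hab _) (hKne.image _) (hbdd u)).symm
  -- upper bound
  obtain ⟨R, hR⟩ := hKcomp.isBounded.subset_closedBall 0
  have hR0 : 0 ≤ R := by
    have := hR (interior_subset hKint)
    simpa using this
  have hub : ∀ (z u : EuclideanSpace ℝ (Fin (d + 1))), ‖u‖ = 1 →
      suppFn K u - (inner ℝ z u : ℝ) ≤ R + ‖z‖ := by
    intro z u hu
    have h1 : suppFn K u ≤ R := by
      refine csSup_le (hKne.image _) ?_
      rintro r ⟨x, hx, rfl⟩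
      calc (inner ℝ x u : ℝ) ≤ ‖x‖ * ‖u‖ := real_inner_le_norm x u
        _ ≤ R := by rw [hu, mul_one]; exact mem_closedBall_zero_iff.1 (hR hx)
    have h2 : -(‖z‖) ≤ (inner ℝ z u : ℝ) := by
      have := abs_real_inner_le_norm z u
      rw [hu, mul_one] at this
      exact le_trans (neg_le_neg this) (neg_abs_le _)
    linarith
  -- lower bound on the interior
  have hlb : ∀ z ∈ interior K, ∃ ε : ℝ, 0 < ε ∧
      ∀ u : EuclideanSpace ℝ (Fin (d + 1)), ‖u‖ = 1 →
        ε ≤ suppFn K u - (inner ℝ z u : ℝ) := by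
    intro z hz
    obtain ⟨ε, hε, hball⟩ := Metric.isOpen_iff.1 isOpen_interior z hz
    refine ⟨ε / 2, by positivity, fun u hu => ?_⟩
    have hx : z + (ε / 2) • u ∈ K := by
      refine interior_subset (hball ?_)
      rw [mem_ball_iff_norm, add_sub_cancel_left, norm_smul, hu, mul_one]
      rw [Real.norm_eq_abs, abs_of_pos (by positivity)]
      linarith
    have hle : (inner ℝ (z + (ε / 2) • u) u : ℝ) ≤ suppFn K u :=
      le_csSup (hbdd u) ⟨_, hx, rfl⟩
    have heq : (inner ℝ (z + (ε / 2) • u) u : ℝ) = (inner ℝ z u : ℝ) + ε / 2 := by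
      rw [inner_add_left, real_inner_smul_left, real_inner_self_eq_norm_mul_norm, hu]
      ring
    linarith [hle, heq ▸ hle]
  -- continuity of the support function
  have hcont : Continuous (suppFn K) := by
    have hsub : ∀ u v : EuclideanSpace ℝ (Fin (d + 1)),
        suppFn K u ≤ suppFn K v + R * ‖u - v‖ := by
      intro u v
      refine csSup_le (hKne.image _) ?_
      rintro r ⟨x, hx, rfl⟩
      have h1 : (inner ℝ x v : ℝ) ≤ suppFn K v := le_csSup (hbdd v) ⟨x, hx, rfl⟩
      have h2 : (inner ℝ x (u - v) : ℝ) ≤ ‖x‖ * ‖u - v‖ := real_inner_le_norm x (u - v)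
      have h3 : ‖x‖ ≤ R := mem_closedBall_zero_iff.1 (hR hx)
      have h4 : (inner ℝ x u : ℝ) = inner ℝ x v + inner ℝ x (u - v) := by
        rw [← inner_add_right]; congr 1; abel
      have h5 : ‖x‖ * ‖u - v‖ ≤ R * ‖u - v‖ :=
        mul_le_mul_of_nonneg_right h3 (norm_nonneg _)
      linarith
    refine (LipschitzWith.of_dist_le_mul (K := R.toNNReal) ?_).continuous
    intro u v
    rw [Real.dist_eq, Real.coe_toNNReal R hR0, dist_eq_norm, abs_sub_le_iff]
    constructor
    · linarith [hsub u v]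
    · have := hsub v u
      rw [norm_sub_rev] at this
      linarith
  -- the weight and the integrand
  set w : Metric.sphere (0 : EuclideanSpace ℝ (Fin (d + 1))) 1 → ℝ :=
    fun u => |(inner ℝ e (u : EuclideanSpace ℝ (Fin (d + 1))) : ℝ)| ^ (s - 1) with hwdef
  set g : EuclideanSpace ℝ (Fin (d + 1)) →
      Metric.sphere (0 : EuclideanSpace ℝ (Fin (d + 1))) 1 → ℝ :=
    fun z u => w u / (suppFn K (u : EuclideanSpace ℝ (Fin (d + 1)))
      - (inner ℝ z (u : EuclideanSpace ℝ (Fin (d + 1))) : ℝ)) ^ p with hgdef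
  have hnorm : ∀ u : Metric.sphere (0 : EuclideanSpace ℝ (Fin (d + 1))) 1,
      ‖(u : EuclideanSpace ℝ (Fin (d + 1)))‖ = 1 :=
    fun u => mem_sphere_zero_iff_norm.1 u.2
  have hwnonneg : ∀ u, 0 ≤ w u := fun u => Real.rpow_nonneg (abs_nonneg _) _
  have hgnonneg : ∀ z ∈ interior K, ∀ u, 0 ≤ g z u := by
    intro z hz u
    obtain ⟨ε, hε, hεle⟩ := hlb z hz
    exact div_nonneg (hwnonneg u)
      (Real.rpow_nonneg (le_trans hε.le (hεle _ (hnorm u))) p)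
  have hwmeas : Measurable w := by
    have h1 : Continuous fun u : Metric.sphere (0 : EuclideanSpace ℝ (Fin (d + 1))) 1 =>
        (inner ℝ e (u : EuclideanSpace ℝ (Fin (d + 1))) : ℝ) :=
      continuous_const.inner continuous_subtype_val
    exact (measurable_abs_rpow (s - 1)).comp h1.measurable
  have hgmeas : ∀ z, Measurable (g z) := by
    intro z
    have h1 : Continuous fun u : Metric.sphere (0 : EuclideanSpace ℝ (Fin (d + 1))) 1 =>
        (suppFn K (u : EuclideanSpace ℝ (Fin (d + 1)))
          - (inner ℝ z (u : EuclideanSpace ℝ (Fin (d + 1))) : ℝ)) ^ p := by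
      refine Continuous.rpow_const ?_ fun u => Or.inr hp.le
      exact (hcont.comp continuous_subtype_val).sub
        (continuous_const.inner continuous_subtype_val)
    exact hwmeas.div h1.measurable
  -- pointwise convexity in z
  have hgconv : ∀ (u : Metric.sphere (0 : EuclideanSpace ℝ (Fin (d + 1))) 1),
      ∀ z ∈ interior K, ∀ z' ∈ interior K, ∀ a b : ℝ, 0 ≤ a → 0 ≤ b → a + b = 1 →
        g (a • z + b • z') u ≤ a * g z u + b * g z' u := by
    intro u z hz z' hz' a b ha hb hab
    obtain ⟨ε, hε, hεle⟩ := hlb z hz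
    obtain ⟨ε', hε', hεle'⟩ := hlb z' hz'
    set t : ℝ := suppFn K (u : EuclideanSpace ℝ (Fin (d + 1)))
      - (inner ℝ z (u : EuclideanSpace ℝ (Fin (d + 1))) : ℝ) with htdef
    set t' : ℝ := suppFn K (u : EuclideanSpace ℝ (Fin (d + 1)))
      - (inner ℝ z' (u : EuclideanSpace ℝ (Fin (d + 1))) : ℝ) with htdef'
    have ht : 0 < t := lt_of_lt_of_le hε (hεle _ (hnorm u))
    have ht' : 0 < t' := lt_of_lt_of_le hε' (hεle' _ (hnorm u))
    have hmid : suppFn K (u : EuclideanSpace ℝ (Fin (d + 1)))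
        - (inner ℝ (a • z + b • z') (u : EuclideanSpace ℝ (Fin (d + 1))) : ℝ)
        = a * t + b * t' := by
      rw [inner_add_left, real_inner_smul_left, real_inner_smul_left, htdef, htdef']
      have : a * suppFn K (u : EuclideanSpace ℝ (Fin (d + 1)))
          + b * suppFn K (u : EuclideanSpace ℝ (Fin (d + 1)))
          = suppFn K (u : EuclideanSpace ℝ (Fin (d + 1))) := by
        rw [← add_mul, hab, one_mul]
      linarith [this]
    have hdiv : ∀ x : ℝ, 0 < x → w u / x ^ p = w u * x ^ (-p) := by
      intro x hx
      rw [Real.rpow_neg hx.le, div_eq_mul_inv]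
    have key := rpow_neg_convex_aux hp.le ht ht' ha hb hab
    have hkey2 : w u * (a * t + b * t') ^ (-p) ≤ w u * (a * t ^ (-p) + b * t' ^ (-p)) :=
      mul_le_mul_of_nonneg_left key (hwnonneg u)
    have hmidpos : 0 < a * t + b * t' := by
      rcases eq_or_lt_of_le ha with h | h
      · rw [← h] at hab ⊢; simp at hab; simp [hab]; positivity
      · have : 0 ≤ b * t' := mul_nonneg hb ht'.le
        nlinarith
    calc g (a • z + b • z') u = w u / (a * t + b * t') ^ p := by rw [hgdef]; simp only []; rw [hmid]
      _ = w u * (a * t + b * t') ^ (-p) := hdiv _ hmidpos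
      _ ≤ w u * (a * t ^ (-p) + b * t' ^ (-p)) := hkey2
      _ = a * (w u * t ^ (-p)) + b * (w u * t' ^ (-p)) := by ring
      _ = a * g z u + b * g z' u := by rw [hgdef]; simp only []; rw [hdiv t ht, hdiv t' ht']
  -- rewrite the goal
  have hFeq : (fun z : EuclideanSpace ℝ (Fin (d + 1)) =>
      c * ∫ u : Metric.sphere (0 : EuclideanSpace ℝ (Fin (d + 1))) 1,
        |(inner ℝ e (u : EuclideanSpace ℝ (Fin (d + 1))) : ℝ)| ^ (s - 1) /
          suppFn ((fun x => x - z) '' K) (u : EuclideanSpace ℝ (Fin (d + 1))) ^ p ∂μ)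
      = fun z => c * ∫ u, g z u ∂μ := by
    funext z
    congr 1
    refine congrArg (integral μ) (funext fun u => ?_)
    rw [htrans]
  rw [hFeq]
  by_cases hW : Integrable w μ
  · -- integrable case
    have hint : ∀ z ∈ interior K, Integrable (g z) μ := by
      intro z hz
      obtain ⟨ε, hε, hεle⟩ := hlb z hz
      refine (hW.const_mul ((ε ^ p)⁻¹)).mono' (hgmeas z).aestronglyMeasurable ?_
      filter_upwards with u
      have hX : ε ≤ suppFn K (u : EuclideanSpace ℝ (Fin (d + 1)))
          - (inner ℝ z (u : EuclideanSpace ℝ (Fin (d + 1))) : ℝ) := hεle _ (hnorm u)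
      have hXp : ε ^ p ≤ (suppFn K (u : EuclideanSpace ℝ (Fin (d + 1)))
          - (inner ℝ z (u : EuclideanSpace ℝ (Fin (d + 1))) : ℝ)) ^ p :=
        Real.rpow_le_rpow hε.le hX hp.le
      have hεp : (0:ℝ) < ε ^ p := Real.rpow_pos_of_pos hε p
      rw [Real.norm_eq_abs, abs_of_nonneg (hgnonneg z hz u)]
      rw [hgdef]; simp only []
      rw [div_eq_mul_inv, mul_comm ((ε ^ p)⁻¹) (w u)]
      exact mul_le_mul_of_nonneg_left ((inv_le_inv₀ (lt_of_lt_of_le hεp hXp) hεp).2 hXp)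
        (hwnonneg u)
    refine ⟨hKconv.interior, fun z hz z' hz' a b ha hb hab => ?_⟩
    simp only [smul_eq_mul]
    have hmid : a • z + b • z' ∈ interior K := hKconv.interior hz hz' ha hb hab
    have h1 : ∫ u, g (a • z + b • z') u ∂μ ≤ ∫ u, (a * g z u + b * g z' u) ∂μ :=
      integral_mono (hint _ hmid)
        (((hint _ hz).const_mul a).add ((hint _ hz').const_mul b))
        (fun u => hgconv u z hz z' hz' a b ha hb hab)
    rw [integral_add ((hint _ hz).const_mul a) ((hint _ hz').const_mul b),
      integral_const_mul, integral_const_mul] at h1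
    calc c * ∫ u, g (a • z + b • z') u ∂μ
        ≤ c * (a * ∫ u, g z u ∂μ + b * ∫ u, g z' u ∂μ) := mul_le_mul_of_nonneg_left h1 hc
      _ = a * (c * ∫ u, g z u ∂μ) + b * (c * ∫ u, g z' u ∂μ) := by ring
  · -- non-integrable case: all integrals vanish
    have hzero : ∀ z ∈ interior K, ∫ u, g z u ∂μ = 0 := by
      intro z hz
      refine integral_undef fun hint => hW ?_
      obtain ⟨ε, hε, hεle⟩ := hlb z hz
      set M : ℝ := R + ‖z‖ with hMdef
      refine (hint.const_mul (M ^ p)).mono' hwmeas.aestronglyMeasurable ?_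
      filter_upwards with u
      set X : ℝ := suppFn K (u : EuclideanSpace ℝ (Fin (d + 1)))
        - (inner ℝ z (u : EuclideanSpace ℝ (Fin (d + 1))) : ℝ) with hXdef
      have hX : ε ≤ X := hεle _ (hnorm u)
      have hXM : X ≤ M := hub z _ (hnorm u)
      have hXpos : 0 < X := lt_of_lt_of_le hε hX
      have hXp : 0 < X ^ p := Real.rpow_pos_of_pos hXpos p
      have hXpM : X ^ p ≤ M ^ p := Real.rpow_le_rpow hXpos.le hXM hp.le
      have hweq : w u = g z u * X ^ p := by
        rw [hgdef]; simp only []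
        rw [div_mul_cancel₀ _ (ne_of_gt hXp)]
      rw [Real.norm_eq_abs, abs_of_nonneg (hwnonneg u), hweq, mul_comm (M ^ p) (g z u)]
      exact mul_le_mul_of_nonneg_left hXpM (hgnonneg z hz u)
    refine ⟨hKconv.interior, fun z hz z' hz' a b ha hb hab => ?_⟩
    have hmid : a • z + b • z' ∈ interior K := hKconv.interior hz hz' ha hb hab
    simp only [smul_eq_mul]
    rw [hzero z hz, hzero z' hz', hzero _ hmid]
    simp
end

section
/- Fix s > 0. Let φ₁, φ₂ : [0,∞) → [0,∞) be Borel functions satisfying φ₁(t₁)φ₂(t₂) ≤ [max(1 - t₁t₂, 0)]^s for all t₁, t₂ ≥ 0. Then ∫_{[0,∞)} φ₁ · ∫_{[0,∞)} φ₂ ≤ (κ_s(2)/2)², where κ_s(2) = ∫_{-1}^{1} (1 - t²)^{s/2} dt. -/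
open MeasureTheory Set ENNReal

lemma sumset_vol {A B C : Set ℝ} (hAm : MeasurableSet A) (hBm : MeasurableSet B)
    (hCm : MeasurableSet C) (hA : A.Nonempty) (hB : B.Nonempty)
    (h : ∀ a ∈ A, ∀ b ∈ B, a + b ∈ C) :
    volume A + volume B ≤ volume C := by
  obtain ⟨a0, ha0⟩ := hA
  obtain ⟨b0, hb0⟩ := hB
  have hAC : volume A ≤ volume C := by
    have hsub : A ⊆ (fun x => x + b0) ⁻¹' C := fun x hx => h x hx b0 hb0
    calc volume A ≤ volume ((fun x => x + b0) ⁻¹' C) := measure_mono hsub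
      _ = volume C := by rw [measure_preimage_add_right]
  have hBC : volume B ≤ volume C := by
    have hsub : B ⊆ (fun x => a0 + x) ⁻¹' C := fun x hx => h a0 ha0 x hx
    calc volume B ≤ volume ((fun x => a0 + x) ⁻¹' C) := measure_mono hsub
      _ = volume C := by rw [measure_preimage_add]
  rcases eq_or_ne (volume C) ∞ with hC | hC
  · rw [hC]; exact le_top
  have hAfin : volume A ≠ ∞ := ne_top_of_le_ne_top hC hAC
  have hBfin : volume B ≠ ∞ := ne_top_of_le_ne_top hC hBC
  refine ENNReal.le_of_forall_pos_le_add fun ε hε _ => ?_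
  have hε2 : ((ε : ℝ≥0∞) / 2) ≠ 0 := by
    simp [ENNReal.div_eq_zero_iff, hε.ne']
  obtain ⟨K, hKA, hKc, hKlt⟩ := hAm.exists_isCompact_lt_add hAfin hε2
  obtain ⟨L, hLB, hLc, hLlt⟩ := hBm.exists_isCompact_lt_add hBfin hε2
  have hhalf : (ε : ℝ≥0∞) / 2 + (ε : ℝ≥0∞) / 2 = ε := ENNReal.add_halves _
  rcases K.eq_empty_or_nonempty with hKe | hKne
  · have : volume A ≤ (ε : ℝ≥0∞) / 2 := by
      simpa [hKe] using hKlt.le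
    calc volume A + volume B ≤ (ε : ℝ≥0∞) / 2 + volume C := add_le_add this hBC
      _ ≤ volume C + ε := by
        rw [add_comm]
        exact add_le_add_right (le_trans ENNReal.half_le_self le_rfl) _
  rcases L.eq_empty_or_nonempty with hLe | hLne
  · have : volume B ≤ (ε : ℝ≥0∞) / 2 := by
      simpa [hLe] using hLlt.le
    calc volume A + volume B ≤ volume C + (ε : ℝ≥0∞) / 2 := add_le_add hAC this
      _ ≤ volume C + ε := add_le_add_right (le_trans ENNReal.half_le_self le_rfl) _
  set k0 := sInf K with hk0def
  set l1 := sSup L with hl1def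
  have hk0 : k0 ∈ K := hKc.sInf_mem hKne
  have hl1 : l1 ∈ L := hLc.sSup_mem hLne
  set X := (fun x => x - l1) ⁻¹' K with hXdef
  set Y := (fun x => x - k0) ⁻¹' L with hYdef
  have hmX : MeasurableSet X := (measurable_sub_const l1) hKc.measurableSet
  have hmY : MeasurableSet Y := (measurable_sub_const k0) hLc.measurableSet
  have hvolX : volume X = volume K := by
    have : X = (fun x => x + (-l1)) ⁻¹' K := by
      ext x; simp [hXdef, sub_eq_add_neg]
    rw [this, measure_preimage_add_right]
  have hvolY : volume Y = volume L := by
    have : Y = (fun x => x + (-k0)) ⁻¹' L := by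
      ext x; simp [hYdef, sub_eq_add_neg]
    rw [this, measure_preimage_add_right]
  have hXC : X ⊆ C := by
    intro x hx
    have := h _ (hKA hx) _ (hLB hl1)
    simpa using this
  have hYC : Y ⊆ C := by
    intro x hx
    have := h _ (hKA hk0) _ (hLB hx)
    simpa [add_sub_cancel] using this
  have hinter : volume (X ∩ Y) = 0 := by
    have hsub : X ∩ Y ⊆ {k0 + l1} := by
      rintro x ⟨hxX, hxY⟩
      have h1 : k0 ≤ x - l1 := csInf_le hKc.bddBelow hxX
      have h2 : x - k0 ≤ l1 := le_csSup hLc.bddAbove hxY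
      have : x = k0 + l1 := by linarith
      simp [this]
    exact measure_mono_null hsub (measure_singleton _)
  have hXY : volume X + volume Y ≤ volume C := by
    have h1 : volume Y ≤ volume (Y \ X) := by
      have hsub : Y ⊆ (Y \ X) ∪ (X ∩ Y) := by
        intro x hx
        by_cases hxX : x ∈ X
        · exact Or.inr ⟨hxX, hx⟩
        · exact Or.inl ⟨hx, hxX⟩
      calc volume Y ≤ volume (Y \ X) + volume (X ∩ Y) :=
            (measure_mono hsub).trans (measure_union_le _ _)
        _ = volume (Y \ X) := by rw [hinter, add_zero]
    calc volume X + volume Y ≤ volume X + volume (Y \ X) := add_le_add_right h1 _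
      _ = volume (X ∪ (Y \ X)) := (measure_union disjoint_sdiff_self_right (hmY.diff hmX)).symm
      _ = volume (X ∪ Y) := by rw [union_diff_self]
      _ ≤ volume C := measure_mono (union_subset hXC hYC)
  calc volume A + volume B ≤ (volume K + (ε : ℝ≥0∞) / 2) + (volume L + (ε : ℝ≥0∞) / 2) :=
        add_le_add hKlt.le hLlt.le
    _ = (volume X + volume Y) + ε := by
        rw [hvolX, hvolY, add_add_add_comm, hhalf]
    _ ≤ volume C + ε := add_le_add_left hXY _

lemma midpoint_vol {F G H : ℝ → ℝ} (hH0 : ∀ w, 0 ≤ H w)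
    (hmF : Measurable F) (hmG : Measurable G) (hmH : Measurable H)
    (hyp : ∀ u v, F u * G v ≤ H ((u + v) / 2) ^ 2) {c : ℝ} (hc : 0 < c)
    (hA : {u | c < F u}.Nonempty) (hB : {v | c < G v}.Nonempty) :
    volume {u | c < F u} + volume {v | c < G v} ≤ 2 * volume {w | c < H w} := by
  set S := {w | c < H w} with hS
  have hmS : MeasurableSet S := measurableSet_lt measurable_const hmH
  set C := (fun x => x * (2:ℝ)⁻¹) ⁻¹' S with hC
  have hmC : MeasurableSet C := (measurable_mul_const _) hmS
  have hvolC : volume C = 2 * volume S := by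
    rw [hC, Real.volume_preimage_mul_right (by norm_num : ((2:ℝ)⁻¹) ≠ 0)]
    norm_num
  have key : volume {u | c < F u} + volume {v | c < G v} ≤ volume C := by
    refine sumset_vol (measurableSet_lt measurable_const hmF)
      (measurableSet_lt measurable_const hmG) hmC hA hB ?_
    intro a ha b hb
    have h1 : c * c < F a * G b :=
      mul_lt_mul'' ha hb hc.le hc.le
    have h2 : c ^ 2 < H ((a + b) / 2) ^ 2 := by
      calc c ^ 2 = c * c := sq c
        _ < F a * G b := h1
        _ ≤ H ((a + b) / 2) ^ 2 := hyp a b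
    have h3 : c < H ((a + b) / 2) := by
      by_contra hcon
      push_neg at hcon
      exact absurd (pow_le_pow_left₀ (hH0 _) hcon 2) (not_le.mpr h2)
    show (a + b) * (2:ℝ)⁻¹ ∈ S
    simpa [hS, div_eq_mul_inv] using h3
  rw [← hvolC]; exact key

lemma core_pl {F G H : ℝ → ℝ} (hF0 : ∀ u, 0 ≤ F u) (hG0 : ∀ v, 0 ≤ G v) (hH0 : ∀ w, 0 ≤ H w)
    (hmF : Measurable F) (hmG : Measurable G) (hmH : Measurable H)
    (hyp : ∀ u v, F u * G v ≤ H ((u + v) / 2) ^ 2) {M : ℝ≥0∞} (hM0 : M ≠ 0) (hMt : M ≠ ∞)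
    (hMF : essSup (fun u => ENNReal.ofReal (F u)) volume = M)
    (hMG : essSup (fun v => ENNReal.ofReal (G v)) volume = M) :
    (∫⁻ u, ENNReal.ofReal (F u)) + (∫⁻ v, ENNReal.ofReal (G v))
      ≤ 2 * ∫⁻ w, ENNReal.ofReal (H w) := by
  have hM' : (0:ℝ) < M.toReal := ENNReal.toReal_pos hM0 hMt
  -- superlevel measure functions vanish above M.toReal
  have hvanish : ∀ (f : ℝ → ℝ), (∀ x, 0 ≤ f x) →
      essSup (fun x => ENNReal.ofReal (f x)) volume = M →
      ∀ t : ℝ, M.toReal ≤ t → volume {x | t < f x} = 0 := by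
    intro f hf0 hfM t ht
    have hae : ∀ᵐ x, ENNReal.ofReal (f x) ≤ M := hfM ▸ ENNReal.ae_le_essSup _
    have hae' : ∀ᵐ x, f x ≤ t := by
      filter_upwards [hae] with x hx
      have : f x ≤ M.toReal := by
        rw [← ENNReal.ofReal_le_iff_le_toReal hMt] at *
        · exact hx
      linarith
    have : {x | t < f x} ⊆ {x | ¬ f x ≤ t} := fun x hx => not_le.mpr hx
    exact measure_mono_null this (ae_iff.mp hae')
  -- superlevel sets nonempty below M.toReal
  have hnonempty : ∀ (f : ℝ → ℝ), (∀ x, 0 ≤ f x) →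
      essSup (fun x => ENNReal.ofReal (f x)) volume = M →
      ∀ t : ℝ, 0 < t → t < M.toReal → {x | t < f x}.Nonempty := by
    intro f hf0 hfM t ht htM
    by_contra hcon
    rw [Set.not_nonempty_iff_eq_empty] at hcon
    have hle : ∀ x, f x ≤ t := by
      intro x
      by_contra hx
      have : x ∈ {x | t < f x} := Set.mem_setOf.mpr (not_le.mp hx)
      rw [hcon] at this
      exact Set.notMem_empty x this
    have : essSup (fun x => ENNReal.ofReal (f x)) volume ≤ ENNReal.ofReal t :=
      essSup_le_of_ae_le _ (Filter.Eventually.of_forall fun x =>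
        ENNReal.ofReal_le_ofReal (hle x))
    rw [hfM] at this
    have h2 : ENNReal.ofReal t < M := by
      rw [← ENNReal.ofReal_toReal hMt]
      exact ENNReal.ofReal_lt_ofReal_iff hM' |>.mpr htM
    exact absurd this (not_le.mpr h2)
  -- layer cake
  have hlcF : (∫⁻ u, ENNReal.ofReal (F u)) = ∫⁻ t in Ioi (0:ℝ), volume {u | t < F u} :=
    lintegral_eq_lintegral_meas_lt volume (Filter.Eventually.of_forall hF0) hmF.aemeasurable
  have hlcG : (∫⁻ v, ENNReal.ofReal (G v)) = ∫⁻ t in Ioi (0:ℝ), volume {v | t < G v} :=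
    lintegral_eq_lintegral_meas_lt volume (Filter.Eventually.of_forall hG0) hmG.aemeasurable
  have hlcH : (∫⁻ w, ENNReal.ofReal (H w)) = ∫⁻ t in Ioi (0:ℝ), volume {w | t < H w} :=
    lintegral_eq_lintegral_meas_lt volume (Filter.Eventually.of_forall hH0) hmH.aemeasurable
  -- restrict to Ioo 0 M.toReal
  have hsplit : ∀ (f : ℝ → ℝ), (∀ x, 0 ≤ f x) →
      essSup (fun x => ENNReal.ofReal (f x)) volume = M →
      (∫⁻ t in Ioi (0:ℝ), volume {x | t < f x})
        = ∫⁻ t in Ioo (0:ℝ) M.toReal, volume {x | t < f x} := by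
    intro f hf0 hfM
    have hun : Ioi (0:ℝ) = Ioo (0:ℝ) M.toReal ∪ Ici M.toReal := by
      ext x
      simp only [mem_Ioi, mem_union, mem_Ioo, mem_Ici]
      constructor
      · intro hx
        rcases lt_or_ge x M.toReal with h | h
        · exact Or.inl ⟨hx, h⟩
        · exact Or.inr h
      · rintro (⟨h, _⟩ | h)
        · exact h
        · linarith
    have hdisj : Disjoint (Ioo (0:ℝ) M.toReal) (Ici M.toReal) := by
      rw [Set.disjoint_left]
      rintro x ⟨_, h1⟩ h2
      exact absurd h2 (not_le.mpr h1)
    rw [hun, lintegral_union measurableSet_Ici hdisj]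
    have : (∫⁻ t in Ici M.toReal, volume {x | t < f x}) = 0 := by
      rw [← lintegral_zero (μ := volume.restrict (Ici M.toReal))]
      refine setLIntegral_congr_fun measurableSet_Ici ?_
      exact fun t ht => hvanish f hf0 hfM t ht
    rw [this, add_zero]
  rw [hlcF, hlcG, hlcH, hsplit F hF0 hMF, hsplit G hG0 hMG]
  -- measurability of distribution functions
  have hdm : ∀ (f : ℝ → ℝ), Measurable fun t => volume {x | t < f x} := by
    intro f
    refine Antitone.measurable ?_
    intro t s hts
    exact measure_mono fun x hx => lt_of_le_of_lt hts hx
  rw [← lintegral_add_left (hdm F) _]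
  have hstep : (∫⁻ t in Ioo (0:ℝ) M.toReal,
      (volume {x | t < F x} + volume {x | t < G x}))
      ≤ ∫⁻ t in Ioo (0:ℝ) M.toReal, 2 * volume {w | t < H w} := by
    refine setLIntegral_mono ((hdm H).const_mul 2) ?_
    intro t ht
    exact midpoint_vol hH0 hmF hmG hmH hyp ht.1
      (hnonempty F hF0 hMF t ht.1 ht.2) (hnonempty G hG0 hMG t ht.1 ht.2)
  refine hstep.trans ?_
  rw [lintegral_const_mul 2 (hdm H)]
  refine mul_le_mul_right ?_ 2
  exact lintegral_mono_set Ioo_subset_Ioi_self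

lemma amgm_ennreal {P Q R : ℝ≥0∞} (h : P + Q ≤ 2 * R) : P * Q ≤ R ^ 2 := by
  rcases eq_or_ne R ∞ with hR | hR
  · have : R ^ 2 = ∞ := by rw [hR]; exact ENNReal.top_pow (by norm_num)
    rw [this]; exact le_top
  have h2R : 2 * R ≠ ∞ := ENNReal.mul_ne_top (by norm_num) hR
  have hP : P ≠ ∞ := ne_top_of_le_ne_top h2R (le_trans le_self_add h)
  have hQ : Q ≠ ∞ := ne_top_of_le_ne_top h2R (le_trans le_add_self h)
  have hreal : P.toReal + Q.toReal ≤ 2 * R.toReal := by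
    rw [← ENNReal.toReal_add hP hQ]
    calc (P + Q).toReal ≤ (2 * R).toReal :=
          ENNReal.toReal_mono h2R h
      _ = 2 * R.toReal := by rw [ENNReal.toReal_mul]; norm_num
  have hP0 : 0 ≤ P.toReal := ENNReal.toReal_nonneg
  have hQ0 : 0 ≤ Q.toReal := ENNReal.toReal_nonneg
  have hpq0 : 0 ≤ P.toReal + Q.toReal := by positivity
  have hsq2 : (P.toReal + Q.toReal) ^ 2 ≤ (2 * R.toReal) ^ 2 := by nlinarith
  have hfin : P.toReal * Q.toReal ≤ R.toReal ^ 2 := by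
    nlinarith [sq_nonneg (P.toReal - Q.toReal)]
  rw [← ENNReal.toReal_le_toReal (ENNReal.mul_ne_top hP hQ) (by simp [ENNReal.pow_ne_top hR]),
    ENNReal.toReal_mul, ENNReal.toReal_pow]
  exact hfin

lemma pl_onedim {F G H : ℝ → ℝ} (hF0 : ∀ u, 0 ≤ F u) (hG0 : ∀ v, 0 ≤ G v) (hH0 : ∀ w, 0 ≤ H w)
    (hmF : Measurable F) (hmG : Measurable G) (hmH : Measurable H)
    (hyp : ∀ u v, F u * G v ≤ H ((u + v) / 2) ^ 2) :
    (∫⁻ u, ENNReal.ofReal (F u)) * (∫⁻ v, ENNReal.ofReal (G v))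
      ≤ (∫⁻ w, ENNReal.ofReal (H w)) ^ 2 := by
  set Z := ∫⁻ w, ENNReal.ofReal (H w) with hZ
  -- truncations
  set Fn : ℕ → ℝ → ℝ := fun n u => min (F u) n with hFn
  set Gn : ℕ → ℝ → ℝ := fun n v => min (G v) n with hGn
  have htrunc : ∀ (f : ℝ → ℝ), (∀ x, 0 ≤ f x) → Measurable f →
      (∫⁻ x, ENNReal.ofReal (f x)) = ⨆ n : ℕ, ∫⁻ x, ENNReal.ofReal (min (f x) n) := by
    intro f hf0 hmf
    rw [← lintegral_iSup (fun n => (hmf.min measurable_const).ennreal_ofReal)]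
    · refine lintegral_congr fun x => ?_
      refine le_antisymm ?_ (iSup_le fun n => ENNReal.ofReal_le_ofReal (min_le_left _ _))
      obtain ⟨n, hn⟩ := exists_nat_ge (f x)
      have : ENNReal.ofReal (f x) = ENNReal.ofReal (min (f x) n) := by
        rw [min_eq_left hn]
      rw [this]
      exact le_iSup (fun n : ℕ => ENNReal.ofReal (min (f x) (n:ℝ))) n
    · intro n m hnm x
      exact ENNReal.ofReal_le_ofReal (min_le_min le_rfl (Nat.cast_le.mpr hnm))
  -- key pairwise bound
  have hpair : ∀ n m : ℕ,
      (∫⁻ u, ENNReal.ofReal (Fn n u)) * (∫⁻ v, ENNReal.ofReal (Gn m v)) ≤ Z ^ 2 := by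
    intro n m
    set a := essSup (fun u => ENNReal.ofReal (Fn n u)) volume with ha
    set b := essSup (fun v => ENNReal.ofReal (Gn m v)) volume with hb
    have hFn0 : ∀ u, 0 ≤ Fn n u := fun u => le_min (hF0 u) (Nat.cast_nonneg n)
    have hGn0 : ∀ v, 0 ≤ Gn m v := fun v => le_min (hG0 v) (Nat.cast_nonneg m)
    have hmFn : Measurable (Fn n) := hmF.min measurable_const
    have hmGn : Measurable (Gn m) := hmG.min measurable_const
    have hat : a ≠ ∞ := by
      refine ne_top_of_le_ne_top (by simp : ENNReal.ofReal n ≠ ∞) ?_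
      exact essSup_le_of_ae_le _ (Filter.Eventually.of_forall fun u =>
        ENNReal.ofReal_le_ofReal (min_le_right _ _))
    have hbt : b ≠ ∞ := by
      refine ne_top_of_le_ne_top (by simp : ENNReal.ofReal m ≠ ∞) ?_
      exact essSup_le_of_ae_le _ (Filter.Eventually.of_forall fun v =>
        ENNReal.ofReal_le_ofReal (min_le_right _ _))
    have hzero : ∀ (f : ℝ → ℝ), Measurable f →
        essSup (fun x => ENNReal.ofReal (f x)) volume = 0 →
        (∫⁻ x, ENNReal.ofReal (f x)) = 0 := by
      intro f hmf hess
      rw [lintegral_eq_zero_iff hmf.ennreal_ofReal]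
      filter_upwards [hess ▸ ENNReal.ae_le_essSup (fun x => ENNReal.ofReal (f x))] with x hx
      simpa using hx
    rcases eq_or_ne a 0 with ha0 | ha0
    · rw [hzero (Fn n) hmFn (ha.symm.trans ha0), zero_mul]
      exact zero_le
    rcases eq_or_ne b 0 with hb0 | hb0
    · rw [hzero (Gn m) hmGn (hb.symm.trans hb0), mul_zero]
      exact zero_le
    -- scaling
    set r := (b / a).toReal with hr
    have hba0 : b / a ≠ 0 := by
      simp [ENNReal.div_eq_zero_iff, hb0, hat]
    have hbat : b / a ≠ ∞ := by
      simp [ENNReal.div_eq_top, ha0, hbt]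
    have hrpos : 0 < r := ENNReal.toReal_pos hba0 hbat
    have hor : ENNReal.ofReal r = b / a := ENNReal.ofReal_toReal hbat
    set F' : ℝ → ℝ := fun u => r * Fn n u with hF'
    set H' : ℝ → ℝ := fun w => Real.sqrt r * H w with hH'
    have hess' : essSup (fun u => ENNReal.ofReal (F' u)) volume = b := by
      have : (fun u => ENNReal.ofReal (F' u))
          = fun u => ENNReal.ofReal r * ENNReal.ofReal (Fn n u) := by
        funext u; rw [hF']; exact ENNReal.ofReal_mul hrpos.le
      rw [this, ENNReal.essSup_const_mul, ← ha, hor, ENNReal.div_mul_cancel ha0 hat]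
    have hyp' : ∀ u v, F' u * Gn m v ≤ H' ((u + v) / 2) ^ 2 := by
      intro u v
      have h1 : Fn n u * Gn m v ≤ H ((u + v) / 2) ^ 2 :=
        le_trans (mul_le_mul (min_le_left _ _) (min_le_left _ _) (hGn0 v) (hF0 u)) (hyp u v)
      calc F' u * Gn m v = r * (Fn n u * Gn m v) := by rw [hF']; ring
        _ ≤ r * H ((u + v) / 2) ^ 2 := by
            exact mul_le_mul_of_nonneg_left h1 hrpos.le
        _ = H' ((u + v) / 2) ^ 2 := by
            rw [hH', mul_pow, Real.sq_sqrt hrpos.le]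
    have hcore := core_pl (fun u => mul_nonneg hrpos.le (hFn0 u)) hGn0
      (fun w => mul_nonneg (Real.sqrt_nonneg r) (hH0 w))
      (measurable_const.mul hmFn) hmGn (measurable_const.mul hmH)
      hyp' hb0 hbt hess' hb.symm
    -- rewrite scaled integrals
    have hint1 : (∫⁻ u, ENNReal.ofReal (F' u))
        = ENNReal.ofReal r * ∫⁻ u, ENNReal.ofReal (Fn n u) := by
      rw [← lintegral_const_mul _ hmFn.ennreal_ofReal]
      refine lintegral_congr fun u => ?_
      rw [hF']; exact ENNReal.ofReal_mul hrpos.le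
    have hint2 : (∫⁻ w, ENNReal.ofReal (H' w)) = ENNReal.ofReal (Real.sqrt r) * Z := by
      rw [hZ, ← lintegral_const_mul _ hmH.ennreal_ofReal]
      refine lintegral_congr fun w => ?_
      rw [hH']; exact ENNReal.ofReal_mul (Real.sqrt_nonneg r)
    rw [hint1, hint2] at hcore
    have hamgm := amgm_ennreal (by
      calc ENNReal.ofReal r * (∫⁻ u, ENNReal.ofReal (Fn n u)) + ∫⁻ v, ENNReal.ofReal (Gn m v)
          ≤ 2 * (ENNReal.ofReal (Real.sqrt r) * Z) := hcore)
    have hsq : (ENNReal.ofReal (Real.sqrt r) * Z) ^ 2 = ENNReal.ofReal r * Z ^ 2 := by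
      rw [mul_pow, sq (ENNReal.ofReal (Real.sqrt r)), ← ENNReal.ofReal_mul (Real.sqrt_nonneg r),
        Real.mul_self_sqrt hrpos.le]
    rw [hsq] at hamgm
    have hr0 : ENNReal.ofReal r ≠ 0 := by
      simp [ENNReal.ofReal_eq_zero, not_le, hrpos]
    have hrt : ENNReal.ofReal r ≠ ∞ := ENNReal.ofReal_ne_top
    rw [mul_assoc] at hamgm
    exact (ENNReal.mul_le_mul_iff_right hr0 hrt).mp hamgm
  rw [htrunc F hF0 hmF, htrunc G hG0 hmG, ENNReal.iSup_mul]
  refine iSup_le fun n => ?_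
  rw [ENNReal.mul_iSup]
  exact iSup_le fun m => hpair n m

/-- One-dimensional Santaló-type lemma: if `φ₁(t₁)φ₂(t₂) ≤ [max(1-t₁t₂,0)]^s` for all
`t₁,t₂ ≥ 0`, then `∫_{[0,∞)} φ₁ · ∫_{[0,∞)} φ₂ ≤ (κ_s(2)/2)²`,
where `κ_s(2) = ∫_{-1}^1 (1-t²)^{s/2} dt`. -/
theorem onedim_santalo (s : ℝ) (hs : 0 < s)
    (φ₁ φ₂ : ℝ → ℝ) (hφ₁ : ∀ t, 0 ≤ φ₁ t) (hφ₂ : ∀ t, 0 ≤ φ₂ t)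
    (hm₁ : Measurable φ₁) (hm₂ : Measurable φ₂)
    (hdual : ∀ t₁ ∈ Set.Ici (0 : ℝ), ∀ t₂ ∈ Set.Ici (0 : ℝ),
      φ₁ t₁ * φ₂ t₂ ≤ max (1 - t₁ * t₂) 0 ^ s) :
    (∫ t in Set.Ici (0 : ℝ), φ₁ t) * ∫ t in Set.Ici (0 : ℝ), φ₂ t
      ≤ ((∫ t in (-1 : ℝ)..1, (1 - t ^ 2) ^ (s / 2)) / 2) ^ 2 := by
  have hcont : Continuous fun t : ℝ => (1 - t ^ 2) ^ (s / 2) := by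
    refine continuous_iff_continuousAt.mpr fun x => ?_
    exact (Real.continuousAt_rpow_const _ _ (Or.inr (by positivity))).comp
      ((continuous_const.sub (continuous_pow 2)).continuousAt)
  set J := ∫ t in (0:ℝ)..1, (1 - t ^ 2) ^ (s / 2) with hJdef
  have hJ0 : 0 ≤ J := by
    refine intervalIntegral.integral_nonneg (by norm_num) fun t ht => ?_
    exact Real.rpow_nonneg (by nlinarith [ht.1, ht.2] : (0:ℝ) ≤ 1 - t ^ 2) _
  have hK2J : (∫ t in (-1 : ℝ)..1, (1 - t ^ 2) ^ (s / 2)) = 2 * J := by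
    have hii : ∀ a b : ℝ, IntervalIntegrable (fun t => (1 - t ^ 2) ^ (s / 2)) volume a b :=
      fun a b => hcont.intervalIntegrable a b
    have h1 : (∫ t in (-1:ℝ)..0, (1 - t ^ 2) ^ (s / 2)) = J := by
      have h2 := intervalIntegral.integral_comp_neg (a := 0) (b := 1)
        (fun t : ℝ => (1 - t ^ 2) ^ (s / 2))
      simp only [neg_sq, neg_zero] at h2
      rw [hJdef, ← h2]
    rw [← intervalIntegral.integral_add_adjacent_intervals (hii (-1) 0) (hii 0 1), h1, two_mul]
  rw [hK2J]
  have h2J : (2 * J) / 2 = J := by ring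
  rw [h2J]
  -- trivial cases: non-integrability
  by_cases hi1 : IntegrableOn φ₁ (Ici 0) volume
  swap
  · rw [integral_undef hi1, zero_mul]; positivity
  by_cases hi2 : IntegrableOn φ₂ (Ici 0) volume
  swap
  · rw [integral_undef hi2, mul_zero]; positivity
  -- the weight function h
  set h : ℝ → ℝ := fun t => max (1 - t ^ 2) 0 ^ (s / 2) with hhdef
  have hconth : Continuous h := by
    refine Continuous.rpow_const ((continuous_const.sub (continuous_pow 2)).max
      continuous_const) fun x => Or.inr (by positivity)
  have hh0 : ∀ t, 0 ≤ h t := fun t => Real.rpow_nonneg (le_max_right _ _) _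
  have hhint : IntegrableOn h (Ioi 0) volume := by
    have hu : Ioi (0:ℝ) = Ioc 0 1 ∪ Ioi 1 := (Ioc_union_Ioi_eq_Ioi (by norm_num)).symm
    rw [hu]
    refine IntegrableOn.union (hconth.integrableOn_Ioc) ?_
    have : EqOn h 0 (Ioi 1) := by
      intro t ht
      have : max (1 - t ^ 2) 0 = 0 := max_eq_right (by nlinarith [mem_Ioi.mp ht])
      simp only [hhdef, this, Pi.zero_apply]
      exact Real.zero_rpow (by positivity)
    exact (integrableOn_congr_fun this measurableSet_Ioi).mpr (integrableOn_zero)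
  -- substitution by exp
  have hIci : ∀ g : ℝ → ℝ≥0∞, (∫⁻ t in Ici (0:ℝ), g t) = ∫⁻ t in Ioi (0:ℝ), g t := by
    intro g
    rw [Measure.restrict_congr_set Ioi_ae_eq_Ici.symm]
  have hexpder : ∀ x ∈ (univ : Set ℝ), HasDerivWithinAt Real.exp (Real.exp x) univ x :=
    fun x _ => (Real.hasDerivAt_exp x).hasDerivWithinAt
  have himg : Real.exp '' univ = Ioi (0:ℝ) := by rw [image_univ, Real.range_exp]
  have hsubst : ∀ f : ℝ → ℝ, (∀ t, 0 ≤ f t) → IntegrableOn f (Ioi 0) volume →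
      (∫⁻ t in Ioi (0:ℝ), ENNReal.ofReal (f t))
        = ∫⁻ u, ENNReal.ofReal (f (Real.exp u) * Real.exp u) := by
    intro f hf0 hfi
    have hBint : IntegrableOn (fun u => |Real.exp u| • f (Real.exp u)) univ volume := by
      rw [← integrableOn_image_iff_integrableOn_abs_deriv_smul MeasurableSet.univ hexpder
        Real.exp_injective.injOn f]
      rwa [himg]
    have hBeq : (∫ t in Ioi (0:ℝ), f t) = ∫ u, |Real.exp u| • f (Real.exp u) := by
      rw [← himg, integral_image_eq_integral_abs_deriv_smul MeasurableSet.univ hexpder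
        Real.exp_injective.injOn f, Measure.restrict_univ]
    rw [← ofReal_integral_eq_lintegral_ofReal hfi
      (ae_restrict_of_forall_mem measurableSet_Ioi fun t _ => hf0 t)]
    rw [hBeq]
    rw [ofReal_integral_eq_lintegral_ofReal (by rwa [integrableOn_univ] at hBint)
      (Filter.Eventually.of_forall fun u =>
        smul_nonneg (abs_nonneg _) (hf0 _))]
    refine lintegral_congr fun u => ?_
    rw [smul_eq_mul, abs_of_pos (Real.exp_pos u), mul_comm]
  -- pass to lintegrals
  set X := ∫⁻ t in Ici (0:ℝ), ENNReal.ofReal (φ₁ t) with hX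
  set Y := ∫⁻ t in Ici (0:ℝ), ENNReal.ofReal (φ₂ t) with hY
  have hXeq : (∫ t in Ici (0:ℝ), φ₁ t) = X.toReal :=
    integral_eq_lintegral_of_nonneg_ae (Filter.Eventually.of_forall hφ₁)
      hm₁.aestronglyMeasurable
  have hYeq : (∫ t in Ici (0:ℝ), φ₂ t) = Y.toReal :=
    integral_eq_lintegral_of_nonneg_ae (Filter.Eventually.of_forall hφ₂)
      hm₂.aestronglyMeasurable
  -- the three transported functions
  set F : ℝ → ℝ := fun u => φ₁ (Real.exp u) * Real.exp u with hF
  set G : ℝ → ℝ := fun v => φ₂ (Real.exp v) * Real.exp v with hG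
  set H : ℝ → ℝ := fun w => h (Real.exp w) * Real.exp w with hH
  have hmF : Measurable F := (hm₁.comp Real.measurable_exp).mul Real.measurable_exp
  have hmG : Measurable G := (hm₂.comp Real.measurable_exp).mul Real.measurable_exp
  have hmH : Measurable H :=
    ((hconth.comp Real.continuous_exp).mul Real.continuous_exp).measurable
  have hF0 : ∀ u, 0 ≤ F u := fun u => mul_nonneg (hφ₁ _) (Real.exp_pos u).le
  have hG0 : ∀ v, 0 ≤ G v := fun v => mul_nonneg (hφ₂ _) (Real.exp_pos v).le
  have hH0 : ∀ w, 0 ≤ H w := fun w => mul_nonneg (hh0 _) (Real.exp_pos w).le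
  have hyp : ∀ u v, F u * G v ≤ H ((u + v) / 2) ^ 2 := by
    intro u v
    have h1 : φ₁ (Real.exp u) * φ₂ (Real.exp v)
        ≤ max (1 - Real.exp u * Real.exp v) 0 ^ s :=
      hdual _ (mem_Ici.mpr (Real.exp_pos u).le) _ (mem_Ici.mpr (Real.exp_pos v).le)
    have he : Real.exp ((u + v) / 2) ^ 2 = Real.exp u * Real.exp v := by
      rw [sq, ← Real.exp_add, ← Real.exp_add]
      ring_nf
    calc F u * G v = (φ₁ (Real.exp u) * φ₂ (Real.exp v)) * (Real.exp u * Real.exp v) := by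
          rw [hF, hG]; ring
      _ ≤ max (1 - Real.exp u * Real.exp v) 0 ^ s * (Real.exp u * Real.exp v) :=
          mul_le_mul_of_nonneg_right h1 (by positivity)
      _ = H ((u + v) / 2) ^ 2 := by
          simp only [hH, hhdef]
          rw [mul_pow, he]
          congr 1
          rw [← Real.rpow_natCast (max (1 - Real.exp u * Real.exp v) 0 ^ (s / 2)) 2,
            ← Real.rpow_mul (le_max_right _ _)]
          norm_num
  have hkey : X * Y ≤ (ENNReal.ofReal J) ^ 2 := by
    have hXF : X = ∫⁻ u, ENNReal.ofReal (F u) := by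
      rw [hX, hIci, hsubst φ₁ hφ₁ ((integrableOn_Ici_iff_integrableOn_Ioi).mp hi1)]
    have hYG : Y = ∫⁻ v, ENNReal.ofReal (G v) := by
      rw [hY, hIci, hsubst φ₂ hφ₂ ((integrableOn_Ici_iff_integrableOn_Ioi).mp hi2)]
    have hZH : (∫⁻ w, ENNReal.ofReal (H w)) = ENNReal.ofReal J := by
      rw [← hsubst h hh0 hhint]
      have hun : Ioi (0:ℝ) = Ioc 0 1 ∪ Ioi 1 := (Ioc_union_Ioi_eq_Ioi (by norm_num)).symm
      rw [hun, lintegral_union measurableSet_Ioi (Ioc_disjoint_Ioi le_rfl)]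
      have hzero : (∫⁻ t in Ioi (1:ℝ), ENNReal.ofReal (h t)) = 0 := by
        rw [← lintegral_zero (μ := volume.restrict (Ioi (1:ℝ)))]
        refine setLIntegral_congr_fun measurableSet_Ioi
          (fun t ht => ?_)
        have hmax : max (1 - t ^ 2) 0 = 0 := max_eq_right (by nlinarith [mem_Ioi.mp ht])
        rw [hhdef]
        simp only [hmax]
        rw [Real.zero_rpow (by positivity), ENNReal.ofReal_zero]
      rw [hzero, add_zero]
      have hcongr : (∫⁻ t in Ioc (0:ℝ) 1, ENNReal.ofReal (h t))
          = ∫⁻ t in Ioc (0:ℝ) 1, ENNReal.ofReal ((1 - t ^ 2) ^ (s / 2)) := by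
        refine setLIntegral_congr_fun measurableSet_Ioc
          (fun t ht => ?_)
        rw [hhdef]
        simp only [max_eq_left (by nlinarith [ht.1, ht.2] : (0:ℝ) ≤ 1 - t ^ 2)]
      rw [hcongr, ← ofReal_integral_eq_lintegral_ofReal hcont.integrableOn_Ioc
        (ae_restrict_of_forall_mem measurableSet_Ioc fun t ht =>
          Real.rpow_nonneg (by nlinarith [ht.1, ht.2] : (0:ℝ) ≤ 1 - t ^ 2) _)]
      rw [hJdef, intervalIntegral.integral_of_le (by norm_num : (0:ℝ) ≤ 1)]
    rw [hXF, hYG, ← hZH]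
    exact pl_onedim hF0 hG0 hH0 hmF hmG hmH hyp
  -- finish
  rw [hXeq, hYeq, ← ENNReal.toReal_mul]
  have hfin : ((ENNReal.ofReal J) ^ 2).toReal = J ^ 2 := by
    rw [ENNReal.toReal_pow, ENNReal.toReal_ofReal hJ0]
  calc (X * Y).toReal ≤ ((ENNReal.ofReal J) ^ 2).toReal :=
        ENNReal.toReal_mono (by simp [ENNReal.pow_ne_top, ENNReal.ofReal_ne_top]) hkey
    _ = J ^ 2 := hfin
end

section
/- Fix s > 0. Let f : ℝ → [0,∞) be a Borel function with finite integral such that ∫_{[0,∞)} f = λ ∫_ℝ f for some λ ∈ (0,1). Then for any Borel g : ℝ → [0,∞) satisfying f(t₁)g(t₂) ≤ [max(1 - t₁t₂, 0)]^s for all t₁, t₂ ∈ ℝ, one has ∫_ℝ f · ∫_ℝ g ≤ κ_s(2)² / (4λ(1-λ)), where κ_s(2) = ∫_{-1}^1 (1-t²)^{s/2} dt. -/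
open MeasureTheory Set
open scoped ENNReal NNReal Pointwise
open Real


lemma sumset_measure (A B S : Set ℝ) (hA : MeasurableSet A) (hB : MeasurableSet B)
    (hS : MeasurableSet S) (hAne : A.Nonempty) (hBne : B.Nonempty)
    (hAfin : volume A ≠ ⊤) (hBfin : volume B ≠ ⊤)
    (hsub : ∀ x ∈ A, ∀ y ∈ B, x + y ∈ S) :
    volume A + volume B ≤ volume S := by
  obtain ⟨a₀, ha₀⟩ := hAne
  obtain ⟨b₀, hb₀⟩ := hBne
  apply ENNReal.le_of_forall_pos_le_add
  intro ε hε _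
  have hε2 : ((ε : ℝ≥0∞) / 2) ≠ 0 := by
    simp [ENNReal.div_eq_zero_iff, (by exact_mod_cast hε.ne' : (ε:ℝ≥0∞) ≠ 0)]
  obtain ⟨K, hKA, hKc, hKm⟩ := hA.exists_isCompact_lt_add hAfin hε2
  obtain ⟨L, hLB, hLc, hLm⟩ := hB.exists_isCompact_lt_add hBfin hε2
  set K' : Set ℝ := K ∪ {a₀} with hK'
  set L' : Set ℝ := L ∪ {b₀} with hL'
  have hK'c : IsCompact K' := hKc.union isCompact_singleton
  have hL'c : IsCompact L' := hLc.union isCompact_singleton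
  have hK'A : K' ⊆ A := union_subset hKA (by simpa using ha₀)
  have hL'B : L' ⊆ B := union_subset hLB (by simpa using hb₀)
  have hK'ne : K'.Nonempty := ⟨a₀, Or.inr rfl⟩
  have hL'ne : L'.Nonempty := ⟨b₀, Or.inr rfl⟩
  set a : ℝ := sInf K' with ha
  set b : ℝ := sSup L' with hb
  have haK : a ∈ K' := hK'c.sInf_mem hK'ne
  have hbL : b ∈ L' := hL'c.sSup_mem hL'ne
  -- the two translated sets
  have hsub1 : (b +ᵥ K') ⊆ S := by
    rintro x ⟨k, hk, rfl⟩
    simpa [add_comm] using hsub k (hK'A hk) b (hL'B hbL)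
  have hsub2 : (a +ᵥ L') ⊆ S := by
    rintro x ⟨m, hm, rfl⟩
    exact hsub a (hK'A haK) m (hL'B hm)
  have hinter : (b +ᵥ K') ∩ (a +ᵥ L') ⊆ {a + b} := by
    rintro x ⟨⟨k, hk, rfl⟩, ⟨m, hm, he⟩⟩
    simp only [vadd_eq_add] at he ⊢
    have h1 : a ≤ k := csInf_le hK'c.bddBelow hk
    have h2 : m ≤ b := le_csSup hL'c.bddAbove hm
    have : b + k = a + b := by linarith
    simp [this]
  have hmK : volume (b +ᵥ K') = volume K' := measure_vadd _ _ _
  have hmL : volume (a +ᵥ L') = volume L' := measure_vadd _ _ _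
  have hunion : volume ((b +ᵥ K') ∪ (a +ᵥ L')) = volume (b +ᵥ K') + volume (a +ᵥ L') := by
    have h0 : volume ((b +ᵥ K') ∩ (a +ᵥ L')) = 0 :=
      measure_mono_null hinter (measure_singleton _)
    have := measure_union_add_inter (μ := volume) (b +ᵥ K') (hL'c.measurableSet.const_vadd a)
    rw [h0, add_zero] at this
    exact this
  calc volume A + volume B ≤ (volume K + ε/2) + (volume L + ε/2) :=
        add_le_add hKm.le hLm.le
    _ ≤ (volume K' + ε/2) + (volume L' + ε/2) := by
        gcongr <;> exact subset_union_left
    _ = volume K' + volume L' + ε := by rw [add_add_add_comm, ENNReal.add_halves]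
    _ = volume ((b +ᵥ K') ∪ (a +ᵥ L')) + ε := by rw [hunion, hmK, hmL]
    _ ≤ volume S + ε := by gcongr; exact union_subset hsub1 hsub2


lemma ennreal_amgm {x y r : ℝ≥0∞} (h : x + y ≤ 2 * r) : x * y ≤ r ^ 2 := by
  rcases eq_or_ne r ⊤ with hr | hr
  · rw [hr]; rw [ENNReal.top_pow (by norm_num)]; exact le_top
  have h2r : 2 * r ≠ ⊤ := by finiteness
  have hx : x ≠ ⊤ := by
    intro hx; rw [hx] at h; simp [ENNReal.add_eq_top] at h; exact h2r h
  have hy : y ≠ ⊤ := by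
    intro hy; rw [hy] at h; simp [ENNReal.add_eq_top] at h; exact h2r h
  lift x to ℝ≥0 using hx
  lift y to ℝ≥0 using hy
  lift r to ℝ≥0 using hr
  have h' : (x : ℝ) + y ≤ 2 * r := by exact_mod_cast h
  have : (x : ℝ) * y ≤ (r : ℝ) ^ 2 := by nlinarith [sq_nonneg ((x : ℝ) - y), x.coe_nonneg, y.coe_nonneg]
  exact_mod_cast this


lemma pl_half (F G R : ℝ → ℝ) (hmF : Measurable F) (hmG : Measurable G) (hmR : Measurable R)
    (hF0 : ∀ x, 0 ≤ F x) (hG0 : ∀ x, 0 ≤ G x) (hR0 : ∀ x, 0 ≤ R x) (hR1 : ∀ x, R x ≤ 1)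
    (hFfin : ∫⁻ x, ENNReal.ofReal (F x) ≠ ⊤) (hGfin : ∫⁻ y, ENNReal.ofReal (G y) ≠ ⊤)
    (hdual : ∀ x y, F x * G y ≤ R ((x + y) / 2) ^ 2) :
    (∫⁻ x, ENNReal.ofReal (F x)) * (∫⁻ y, ENNReal.ofReal (G y))
      ≤ (∫⁻ z, ENNReal.ofReal (R z)) ^ 2 := by
  by_cases hFpos : ∃ x, 0 < F x
  swap
  · push_neg at hFpos
    have : ∀ x, F x = 0 := fun x => le_antisymm (hFpos x) (hF0 x)
    simp [this]
  by_cases hGpos : ∃ y, 0 < G y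
  swap
  · push_neg at hGpos
    have : ∀ y, G y = 0 := fun y => le_antisymm (hGpos y) (hG0 y)
    simp [this]
  obtain ⟨x₀, hx₀⟩ := hFpos
  obtain ⟨y₀, hy₀⟩ := hGpos
  -- boundedness
  have hFG1 : ∀ x y, F x * G y ≤ 1 := fun x y =>
    (hdual x y).trans (pow_le_one₀ (hR0 _) (hR1 _))
  have hbddF : BddAbove (Set.range F) := by
    refine ⟨1 / G y₀, ?_⟩
    rintro _ ⟨x, rfl⟩
    rw [le_div_iff₀ hy₀]
    exact hFG1 x y₀
  have hbddG : BddAbove (Set.range G) := by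
    refine ⟨1 / F x₀, ?_⟩
    rintro _ ⟨y, rfl⟩
    rw [le_div_iff₀ hx₀]
    calc G y * F x₀ = F x₀ * G y := mul_comm _ _
      _ ≤ 1 := hFG1 x₀ y
  set SF := sSup (Set.range F) with hSF
  set SG := sSup (Set.range G) with hSG
  have hSFpos : 0 < SF := lt_of_lt_of_le hx₀ (le_csSup hbddF (mem_range_self x₀))
  have hSGpos : 0 < SG := lt_of_lt_of_le hy₀ (le_csSup hbddG (mem_range_self y₀))
  have hFle : ∀ x, F x ≤ SF := fun x => le_csSup hbddF (mem_range_self x)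
  have hGle : ∀ y, G y ≤ SG := fun y => le_csSup hbddG (mem_range_self y)
  set a := Real.sqrt SF with ha'
  set b := Real.sqrt SG with hb'
  have ha : 0 < a := Real.sqrt_pos.mpr hSFpos
  have hb : 0 < b := Real.sqrt_pos.mpr hSGpos
  have hSFa : SF = a ^ 2 := (Real.sq_sqrt hSFpos.le).symm
  have hSGb : SG = b ^ 2 := (Real.sq_sqrt hSGpos.le).symm
  set Ft : ℝ → ℝ := fun x => (b / a) * F x with hFt
  set Gt : ℝ → ℝ := fun y => (a / b) * G y with hGt
  have hmFt : Measurable Ft := (measurable_const.mul hmF)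
  have hmGt : Measurable Gt := (measurable_const.mul hmG)
  have hFt0 : ∀ x, 0 ≤ Ft x := fun x => mul_nonneg (by positivity) (hF0 x)
  have hGt0 : ∀ y, 0 ≤ Gt y := fun y => mul_nonneg (by positivity) (hG0 y)
  set m := a * b with hm
  have hmpos : 0 < m := mul_pos ha hb
  have hFtle : ∀ x, Ft x ≤ m := by
    intro x
    have h1 : (b / a) * F x ≤ (b / a) * SF := by
      apply mul_le_mul_of_nonneg_left (hFle x) (by positivity)
    calc Ft x ≤ (b / a) * SF := h1
      _ = m := by rw [hSFa]; field_simp [hm]; ring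
  have hGtle : ∀ y, Gt y ≤ m := by
    intro y
    have h1 : (a / b) * G y ≤ (a / b) * SG := by
      apply mul_le_mul_of_nonneg_left (hGle y) (by positivity)
    calc Gt y ≤ (a / b) * SG := h1
      _ = m := by rw [hSGb]; field_simp [hm]; ring
  have hprodeq : ∀ x y, Ft x * Gt y = F x * G y := by
    intro x y
    have hab : b / a * (a / b) = 1 := by field_simp
    show (b / a) * F x * ((a / b) * G y) = F x * G y
    rw [mul_mul_mul_comm, hab, one_mul]
  -- scaled lintegrals
  have hLFt : ∫⁻ x, ENNReal.ofReal (Ft x) = ENNReal.ofReal (b / a) * ∫⁻ x, ENNReal.ofReal (F x) := by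
    simp_rw [hFt, ENNReal.ofReal_mul (by positivity : (0:ℝ) ≤ b / a)]
    exact lintegral_const_mul' _ _ ENNReal.ofReal_ne_top
  have hLGt : ∫⁻ y, ENNReal.ofReal (Gt y) = ENNReal.ofReal (a / b) * ∫⁻ y, ENNReal.ofReal (G y) := by
    simp_rw [hGt, ENNReal.ofReal_mul (by positivity : (0:ℝ) ≤ a / b)]
    exact lintegral_const_mul' _ _ ENNReal.ofReal_ne_top
  have hLFtfin : ∫⁻ x, ENNReal.ofReal (Ft x) ≠ ⊤ := by
    rw [hLFt]; exact ENNReal.mul_ne_top ENNReal.ofReal_ne_top hFfin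
  have hLGtfin : ∫⁻ y, ENNReal.ofReal (Gt y) ≠ ⊤ := by
    rw [hLGt]; exact ENNReal.mul_ne_top ENNReal.ofReal_ne_top hGfin
  -- layer cake
  have layerF : ∫⁻ x, ENNReal.ofReal (Ft x) = ∫⁻ t in Set.Ioi 0, volume {x | t < Ft x} :=
    lintegral_eq_lintegral_meas_lt volume (Filter.Eventually.of_forall hFt0) hmFt.aemeasurable
  have layerG : ∫⁻ y, ENNReal.ofReal (Gt y) = ∫⁻ t in Set.Ioi 0, volume {y | t < Gt y} :=
    lintegral_eq_lintegral_meas_lt volume (Filter.Eventually.of_forall hGt0) hmGt.aemeasurable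
  have layerR : ∫⁻ z, ENNReal.ofReal (R z) = ∫⁻ t in Set.Ioi 0, volume {z | t < R z} :=
    lintegral_eq_lintegral_meas_lt volume (Filter.Eventually.of_forall hR0) hmR.aemeasurable
  -- antitone measurability
  have hantiF : Antitone (fun t : ℝ => volume {x | t < Ft x}) := by
    intro t t' htt'
    exact measure_mono (fun x hx => lt_of_le_of_lt htt' hx)
  have hantiG : Antitone (fun t : ℝ => volume {y | t < Gt y}) := by
    intro t t' htt'
    exact measure_mono (fun y hy => lt_of_le_of_lt htt' hy)
  have hantiR : Antitone (fun t : ℝ => volume {z | t < R z}) := by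
    intro t t' htt'
    exact measure_mono (fun z hz => lt_of_le_of_lt htt' hz)
  -- pointwise level set inequality
  have hlevel : ∀ t ∈ Set.Ioi (0:ℝ),
      volume {x | t < Ft x} + volume {y | t < Gt y} ≤ 2 * volume {z | t < R z} := by
    intro t ht
    simp only [Set.mem_Ioi] at ht
    by_cases htm : t < m
    swap
    · have hA : {x | t < Ft x} = ∅ := by
        ext x; simp only [Set.mem_setOf_eq, Set.mem_empty_iff_false, iff_false, not_lt]
        exact (hFtle x).trans (not_lt.mp htm)
      have hB : {y | t < Gt y} = ∅ := by
        ext y; simp only [Set.mem_setOf_eq, Set.mem_empty_iff_false, iff_false, not_lt]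
        exact (hGtle y).trans (not_lt.mp htm)
      simp [hA, hB]
    -- main case
    have hAne : {x | t < Ft x}.Nonempty := by
      have h1 : t * a / b < SF := by
        rw [hSFa]
        rw [div_lt_iff₀ hb]
        calc t * a < m * a := by apply mul_lt_mul_of_pos_right htm ha
          _ = a ^ 2 * b := by rw [hm]; ring
      obtain ⟨_, ⟨x, rfl⟩, hx⟩ := exists_lt_of_lt_csSup (Set.range_nonempty F) h1
      refine ⟨x, ?_⟩
      show t < (b / a) * F x
      have := mul_lt_mul_of_pos_left hx (div_pos hb ha)
      calc t = (b / a) * (t * a / b) := by field_simp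
        _ < (b / a) * F x := this
    have hBne : {y | t < Gt y}.Nonempty := by
      have h1 : t * b / a < SG := by
        rw [hSGb]
        rw [div_lt_iff₀ ha]
        calc t * b < m * b := by apply mul_lt_mul_of_pos_right htm hb
          _ = b ^ 2 * a := by rw [hm]; ring
      obtain ⟨_, ⟨y, rfl⟩, hy⟩ := exists_lt_of_lt_csSup (Set.range_nonempty G) h1
      refine ⟨y, ?_⟩
      show t < (a / b) * G y
      have := mul_lt_mul_of_pos_left hy (div_pos ha hb)
      calc t = (a / b) * (t * b / a) := by field_simp
        _ < (a / b) * G y := this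
    have hAmeas : MeasurableSet {x | t < Ft x} := measurableSet_lt measurable_const hmFt
    have hBmeas : MeasurableSet {y | t < Gt y} := measurableSet_lt measurable_const hmGt
    have hAfin : volume {x | t < Ft x} ≠ ⊤ := by
      have hsub : {x | t < Ft x} ⊆ {x | ENNReal.ofReal t ≤ ENNReal.ofReal (Ft x)} :=
        fun x hx => ENNReal.ofReal_le_ofReal (le_of_lt hx)
      have := (measure_mono hsub).trans
        (meas_ge_le_lintegral_div (μ := volume)
          (ENNReal.measurable_ofReal.comp hmFt).aemeasurable
          (by simpa using (ENNReal.ofReal_pos.mpr ht).ne') ENNReal.ofReal_ne_top)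
      refine ne_top_of_le_ne_top ?_ this
      exact (ENNReal.div_lt_top hLFtfin (ENNReal.ofReal_pos.mpr ht).ne').ne
    have hBfin : volume {y | t < Gt y} ≠ ⊤ := by
      have hsub : {y | t < Gt y} ⊆ {y | ENNReal.ofReal t ≤ ENNReal.ofReal (Gt y)} :=
        fun y hy => ENNReal.ofReal_le_ofReal (le_of_lt hy)
      have := (measure_mono hsub).trans
        (meas_ge_le_lintegral_div (μ := volume)
          (ENNReal.measurable_ofReal.comp hmGt).aemeasurable
          (by simpa using (ENNReal.ofReal_pos.mpr ht).ne') ENNReal.ofReal_ne_top)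
      refine ne_top_of_le_ne_top ?_ this
      exact (ENNReal.div_lt_top hLGtfin (ENNReal.ofReal_pos.mpr ht).ne').ne
    -- the dilated target set
    set S : Set ℝ := {z | t < R (z / 2)} with hSdef
    have hSmeas : MeasurableSet S := measurableSet_lt measurable_const (hmR.comp (measurable_id.div_const 2))
    have hsub : ∀ x ∈ {x | t < Ft x}, ∀ y ∈ {y | t < Gt y}, x + y ∈ S := by
      intro x hx y hy
      simp only [Set.mem_setOf_eq] at hx hy ⊢
      have h1 : t * t < Ft x * Gt y := mul_lt_mul'' hx hy ht.le ht.le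
      have h2 : t ^ 2 < R ((x + y) / 2) ^ 2 := by
        rw [sq]
        calc t * t < Ft x * Gt y := h1
          _ = F x * G y := hprodeq x y
          _ ≤ R ((x + y) / 2) ^ 2 := hdual x y
      exact lt_of_pow_lt_pow_left₀ 2 (hR0 _) h2
    have hSvol : volume S = 2 * volume {z | t < R z} := by
      have hSeq : S = (2:ℝ) • {z | t < R z} := by
        ext z
        rw [Set.mem_smul_set_iff_inv_smul_mem₀ (two_ne_zero)]
        simp [hSdef, smul_eq_mul, div_eq_inv_mul]
      rw [hSeq, Measure.addHaar_smul]
      norm_num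
    calc volume {x | t < Ft x} + volume {y | t < Gt y} ≤ volume S :=
          sumset_measure _ _ _ hAmeas hBmeas hSmeas hAne hBne hAfin hBfin hsub
      _ = 2 * volume {z | t < R z} := hSvol
  -- integrate the level inequality
  have hsum : (∫⁻ x, ENNReal.ofReal (Ft x)) + (∫⁻ y, ENNReal.ofReal (Gt y))
      ≤ 2 * ∫⁻ z, ENNReal.ofReal (R z) := by
    rw [layerF, layerG, layerR, ← lintegral_add_left hantiF.measurable, ← lintegral_const_mul' _ _ (by norm_num : (2:ℝ≥0∞) ≠ ⊤)]
    exact setLIntegral_mono (measurable_const.mul hantiR.measurable) hlevel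
  -- conclude
  have key : (∫⁻ x, ENNReal.ofReal (Ft x)) * (∫⁻ y, ENNReal.ofReal (Gt y))
      ≤ (∫⁻ z, ENNReal.ofReal (R z)) ^ 2 := ennreal_amgm hsum
  have hc : ENNReal.ofReal (b / a) * ENNReal.ofReal (a / b) = 1 := by
    rw [← ENNReal.ofReal_mul (by positivity)]
    rw [show (b / a) * (a / b) = 1 by field_simp]
    exact ENNReal.ofReal_one
  calc (∫⁻ x, ENNReal.ofReal (F x)) * (∫⁻ y, ENNReal.ofReal (G y))
      = (ENNReal.ofReal (b / a) * ∫⁻ x, ENNReal.ofReal (F x)) *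
        (ENNReal.ofReal (a / b) * ∫⁻ y, ENNReal.ofReal (G y)) := by
        rw [mul_mul_mul_comm, hc, one_mul]
    _ = (∫⁻ x, ENNReal.ofReal (Ft x)) * (∫⁻ y, ENNReal.ofReal (Gt y)) := by rw [hLFt, hLGt]
    _ ≤ (∫⁻ z, ENNReal.ofReal (R z)) ^ 2 := key


lemma halfline (s : ℝ) (hs : 0 < s) (f g : ℝ → ℝ) (hmf : Measurable f) (hmg : Measurable g)
    (hf0 : ∀ t, 0 ≤ f t) (hg0 : ∀ t, 0 ≤ g t)
    (hfi : IntegrableOn f (Ioi 0)) (hgi : IntegrableOn g (Ioi 0))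
    (hd : ∀ x y : ℝ, 0 ≤ x → 0 ≤ y → f x * g y ≤ max (1 - x * y) 0 ^ s) :
    (∫ x in Ioi (0:ℝ), f x) * (∫ y in Ioi (0:ℝ), g y)
      ≤ (∫ z in Ioi (0:ℝ), max (1 - z ^ 2) 0 ^ (s / 2)) ^ 2 := by
  set ρ : ℝ → ℝ := fun z => max (1 - z ^ 2) 0 ^ (s / 2) with hρdef
  have hcρ : Continuous ρ :=
    ((continuous_const.sub (continuous_pow 2)).max continuous_const).rpow_const
      (fun x => Or.inr (by positivity))
  have hmρ : Measurable ρ := hcρ.measurable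
  have hρ0 : ∀ z, 0 ≤ ρ z := fun z => Real.rpow_nonneg (le_max_right _ _) _
  have hρ1 : ∀ z, ρ z ≤ 1 := fun z =>
    Real.rpow_le_one (le_max_right _ _) (max_le (by nlinarith [sq_nonneg z]) zero_le_one)
      (by positivity)
  have hρzero : ∀ z : ℝ, 1 ≤ z → ρ z = 0 := by
    intro z hz
    have h1 : max (1 - z ^ 2) 0 = 0 := max_eq_right (by nlinarith)
    rw [hρdef]
    simp only [h1]
    exact Real.zero_rpow (by positivity)
  have hρint : IntegrableOn ρ (Ioi 0) := by
    rw [← Ioc_union_Ioi_eq_Ioi (zero_le_one : (0:ℝ) ≤ 1)]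
    apply IntegrableOn.union
    · apply Measure.integrableOn_of_bounded (M := 1) measure_Ioc_lt_top.ne
        hmρ.aestronglyMeasurable
      filter_upwards with z
      rw [Real.norm_eq_abs, abs_of_nonneg (hρ0 z)]
      exact hρ1 z
    · exact (integrableOn_congr_fun (g := fun _ => (0:ℝ))
        (fun z hz => hρzero z (le_of_lt hz)) measurableSet_Ioi).mpr (integrableOn_zero)
  -- change of variables
  have hexp : ∀ x ∈ (univ : Set ℝ), HasDerivWithinAt Real.exp (Real.exp x) univ x :=
    fun x _ => (Real.hasDerivAt_exp x).hasDerivWithinAt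
  have hinj : InjOn Real.exp (univ : Set ℝ) := Real.exp_injective.injOn
  have himg : Real.exp '' univ = Ioi (0:ℝ) := by rw [image_univ, Real.range_exp]
  have hcov : ∀ (φ : ℝ → ℝ), ∫ x in Ioi (0:ℝ), φ x = ∫ a, |Real.exp a| • φ (Real.exp a) := by
    intro φ
    rw [← himg, integral_image_eq_integral_abs_deriv_smul MeasurableSet.univ hexp hinj φ,
      Measure.restrict_univ]
  have hcovi : ∀ (φ : ℝ → ℝ), IntegrableOn φ (Ioi (0:ℝ)) →
      Integrable (fun a => |Real.exp a| • φ (Real.exp a)) := by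
    intro φ hφ
    rw [← integrableOn_univ]
    exact (integrableOn_image_iff_integrableOn_abs_deriv_smul MeasurableSet.univ hexp hinj φ).mp
      (himg ▸ hφ)
  set F : ℝ → ℝ := fun a => |Real.exp a| • f (Real.exp a) with hFdef
  set G : ℝ → ℝ := fun a => |Real.exp a| • g (Real.exp a) with hGdef
  set R : ℝ → ℝ := fun a => |Real.exp a| • ρ (Real.exp a) with hRdef
  have hFsimp : ∀ a, F a = Real.exp a * f (Real.exp a) := by
    intro a; rw [hFdef]; simp [abs_of_pos (Real.exp_pos a), smul_eq_mul]
  have hGsimp : ∀ a, G a = Real.exp a * g (Real.exp a) := by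
    intro a; rw [hGdef]; simp [abs_of_pos (Real.exp_pos a), smul_eq_mul]
  have hRsimp : ∀ a, R a = Real.exp a * ρ (Real.exp a) := by
    intro a; rw [hRdef]; simp [abs_of_pos (Real.exp_pos a), smul_eq_mul]
  have hmF : Measurable F := (Real.measurable_exp.abs.smul (hmf.comp Real.measurable_exp))
  have hmG : Measurable G := (Real.measurable_exp.abs.smul (hmg.comp Real.measurable_exp))
  have hmR : Measurable R := (Real.measurable_exp.abs.smul (hmρ.comp Real.measurable_exp))
  have hF0 : ∀ a, 0 ≤ F a := fun a => by
    rw [hFsimp a]; exact mul_nonneg (Real.exp_pos a).le (hf0 _)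
  have hG0 : ∀ a, 0 ≤ G a := fun a => by
    rw [hGsimp a]; exact mul_nonneg (Real.exp_pos a).le (hg0 _)
  have hR0 : ∀ a, 0 ≤ R a := fun a => by
    rw [hRsimp a]; exact mul_nonneg (Real.exp_pos a).le (hρ0 _)
  have hR1 : ∀ a, R a ≤ 1 := by
    intro a
    rw [hRsimp a]
    rcases le_or_gt (Real.exp a) 1 with h | h
    · calc Real.exp a * ρ (Real.exp a) ≤ 1 * 1 :=
          mul_le_mul h (hρ1 _) (hρ0 _) zero_le_one
        _ = 1 := one_mul 1
    · rw [hρzero _ h.le, mul_zero]; exact zero_le_one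
  have hFint : Integrable F := hcovi f hfi
  have hGint : Integrable G := hcovi g hgi
  have hRint : Integrable R := hcovi ρ hρint
  have hFfin : ∫⁻ x, ENNReal.ofReal (F x) ≠ ⊤ := hFint.lintegral_lt_top.ne
  have hGfin : ∫⁻ y, ENNReal.ofReal (G y) ≠ ⊤ := hGint.lintegral_lt_top.ne
  have hduality : ∀ a b, F a * G b ≤ R ((a + b) / 2) ^ 2 := by
    intro a b
    rw [hFsimp, hGsimp, hRsimp]
    have hc : Real.exp ((a + b) / 2) ^ 2 = Real.exp a * Real.exp b := by
      rw [sq, ← Real.exp_add, ← Real.exp_add]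
      ring_nf
    have hrw : (Real.exp ((a + b) / 2) * ρ (Real.exp ((a + b) / 2))) ^ 2
        = max (1 - Real.exp a * Real.exp b) 0 ^ s * (Real.exp a * Real.exp b) := by
      rw [mul_pow, hρdef]
      simp only []
      rw [hc, ← Real.rpow_natCast (max (1 - Real.exp a * Real.exp b) 0 ^ (s/2)) 2,
        ← Real.rpow_mul (le_max_right _ _)]
      push_cast
      rw [div_mul_cancel₀ s (by norm_num : (2:ℝ) ≠ 0)]
      ring
    rw [hrw]
    calc Real.exp a * f (Real.exp a) * (Real.exp b * g (Real.exp b))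
        = f (Real.exp a) * g (Real.exp b) * (Real.exp a * Real.exp b) := by ring
      _ ≤ max (1 - Real.exp a * Real.exp b) 0 ^ s * (Real.exp a * Real.exp b) := by
          apply mul_le_mul_of_nonneg_right
            (hd _ _ (Real.exp_pos a).le (Real.exp_pos b).le)
            (by positivity)
  have key := pl_half F G R hmF hmG hmR hF0 hG0 hR0 hR1 hFfin hGfin hduality
  -- convert to Bochner
  have eF : ENNReal.ofReal (∫ a, F a) = ∫⁻ a, ENNReal.ofReal (F a) :=
    ofReal_integral_eq_lintegral_ofReal hFint (Filter.Eventually.of_forall hF0)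
  have eG : ENNReal.ofReal (∫ a, G a) = ∫⁻ a, ENNReal.ofReal (G a) :=
    ofReal_integral_eq_lintegral_ofReal hGint (Filter.Eventually.of_forall hG0)
  have eR : ENNReal.ofReal (∫ a, R a) = ∫⁻ a, ENNReal.ofReal (R a) :=
    ofReal_integral_eq_lintegral_ofReal hRint (Filter.Eventually.of_forall hR0)
  have hIF : ∫ x in Ioi (0:ℝ), f x = ∫ a, F a := hcov f
  have hIG : ∫ y in Ioi (0:ℝ), g y = ∫ a, G a := hcov g
  have hIR : ∫ z in Ioi (0:ℝ), ρ z = ∫ a, R a := hcov ρ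
  have hRnn : 0 ≤ ∫ a, R a := integral_nonneg hR0
  rw [hIF, hIG, hIR]
  have h2 : ENNReal.ofReal ((∫ a, F a) * ∫ a, G a) ≤ ENNReal.ofReal ((∫ a, R a) ^ 2) := by
    rw [ENNReal.ofReal_mul (integral_nonneg hF0), ENNReal.ofReal_pow hRnn, eF, eG, eR]
    exact key
  exact (ENNReal.ofReal_le_ofReal_iff (by positivity)).mp h2


/-- One-dimensional Santaló inequality with non-central polarity point:
if `∫_{[0,∞)} f = λ ∫_ℝ f` and `f(t₁)g(t₂) ≤ [max(1-t₁t₂,0)]^s` for all `t₁,t₂ ∈ ℝ`,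
then `∫_ℝ f · ∫_ℝ g ≤ κ_s(2)²/(4λ(1-λ))`. -/
theorem onedim_santalo_lambda (s : ℝ) (hs : 0 < s)
    (f : ℝ → ℝ) (hf : ∀ t, 0 ≤ f t) (hmf : Measurable f) (hint : Integrable f)
    (l : ℝ) (hl : l ∈ Set.Ioo (0 : ℝ) 1)
    (hlf : ∫ t in Set.Ici (0 : ℝ), f t = l * ∫ t, f t)
    (g : ℝ → ℝ) (hg : ∀ t, 0 ≤ g t) (hmg : Measurable g)
    (hdual : ∀ t₁ t₂ : ℝ, f t₁ * g t₂ ≤ max (1 - t₁ * t₂) 0 ^ s) :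
    (∫ t, f t) * ∫ t, g t
      ≤ (∫ t in (-1 : ℝ)..1, (1 - t ^ 2) ^ (s / 2)) ^ 2 / (4 * l * (1 - l)) := by
  obtain ⟨hl0, hl1⟩ := hl
  have hden : 0 < 4 * l * (1 - l) := by nlinarith
  by_cases hgi : Integrable g
  swap
  · rw [integral_undef hgi, mul_zero]
    exact div_nonneg (sq_nonneg _) hden.le
  -- the kernel integral
  set ρ : ℝ → ℝ := fun z => max (1 - z ^ 2) 0 ^ (s / 2) with hρdef
  set φ : ℝ → ℝ := fun z => (1 - z ^ 2) ^ (s / 2) with hφdef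
  set Kp : ℝ := ∫ z in Ioi (0:ℝ), ρ z with hKp
  have hρzero : ∀ z : ℝ, 1 ≤ z → ρ z = 0 := by
    intro z hz
    have h1 : max (1 - z ^ 2) 0 = 0 := max_eq_right (by nlinarith)
    rw [hρdef]; simp only [h1]; exact Real.zero_rpow (by positivity)
  have hcρ : Continuous ρ :=
    ((continuous_const.sub (continuous_pow 2)).max continuous_const).rpow_const
      (fun x => Or.inr (by positivity))
  have hcφ : Continuous φ :=
    (continuous_const.sub (continuous_pow 2)).rpow_const (fun x => Or.inr (by positivity))
  have hρ0 : ∀ z, 0 ≤ ρ z := fun z => Real.rpow_nonneg (le_max_right _ _) _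
  have hρ1 : ∀ z, ρ z ≤ 1 := fun z =>
    Real.rpow_le_one (le_max_right _ _) (max_le (by nlinarith [sq_nonneg z]) zero_le_one)
      (by positivity)
  have hρint1 : IntegrableOn ρ (Ioc (0:ℝ) 1) := by
    apply Measure.integrableOn_of_bounded (M := 1) measure_Ioc_lt_top.ne
      hcρ.measurable.aestronglyMeasurable
    filter_upwards with z
    rw [Real.norm_eq_abs, abs_of_nonneg (hρ0 z)]
    exact hρ1 z
  have hρint2 : IntegrableOn ρ (Ioi (1:ℝ)) :=
    (integrableOn_congr_fun (g := fun _ => (0:ℝ))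
      (fun z hz => hρzero z (le_of_lt hz)) measurableSet_Ioi).mpr integrableOn_zero
  -- Kp = ∫_{0..1} φ
  have hKp1 : Kp = ∫ z in (0:ℝ)..1, φ z := by
    rw [hKp, ← Ioc_union_Ioi_eq_Ioi (zero_le_one : (0:ℝ) ≤ 1),
      setIntegral_union (Ioc_disjoint_Ioi le_rfl) measurableSet_Ioi hρint1 hρint2]
    rw [setIntegral_congr_fun (g := fun _ => (0:ℝ)) measurableSet_Ioi
      (fun z hz => hρzero z (le_of_lt hz)), integral_zero, add_zero]
    rw [intervalIntegral.integral_of_le zero_le_one]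
    apply setIntegral_congr_fun measurableSet_Ioc
    intro z hz
    rw [hρdef, hφdef]
    simp only [max_eq_left (by nlinarith [hz.1, hz.2] : (0:ℝ) ≤ 1 - z ^ 2)]
  -- K = 2 Kp
  have hK : (∫ t in (-1 : ℝ)..1, (1 - t ^ 2) ^ (s / 2)) = 2 * Kp := by
    have h1 : (∫ t in (-1 : ℝ)..1, φ t) =
        (∫ t in (-1 : ℝ)..0, φ t) + ∫ t in (0:ℝ)..1, φ t :=
      (intervalIntegral.integral_add_adjacent_intervals
        (hcφ.intervalIntegrable _ _) (hcφ.intervalIntegrable _ _)).symm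
    have h2 : (∫ t in (-1 : ℝ)..0, φ t) = ∫ t in (0:ℝ)..1, φ t := by
      have := intervalIntegral.integral_comp_neg (a := (0:ℝ)) (b := 1) φ
      simp only [neg_zero] at this
      rw [← this]
      apply intervalIntegral.integral_congr
      intro t _
      rw [hφdef]; simp [neg_pow]
    calc (∫ t in (-1 : ℝ)..1, φ t) = (∫ t in (-1:ℝ)..0, φ t) + ∫ t in (0:ℝ)..1, φ t := h1
      _ = 2 * Kp := by rw [h2, hKp1]; ring
  -- bounds from halfline lemma
  have bound1 := halfline s hs f g hmf hmg hf hg hint.integrableOn hgi.integrableOn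
    (fun x y _ _ => hdual x y)
  have hmfneg : Measurable (fun x => f (-x)) := hmf.comp measurable_neg
  have hmgneg : Measurable (fun y => g (-y)) := hmg.comp measurable_neg
  have hfnegint : Integrable (fun x => f (-x)) := by
    have := ((Measure.measurePreserving_neg (volume : Measure ℝ)).integrable_comp
      hint.aestronglyMeasurable).mpr hint
    exact this
  have hgnegint : Integrable (fun y => g (-y)) := by
    have := ((Measure.measurePreserving_neg (volume : Measure ℝ)).integrable_comp
      hgi.aestronglyMeasurable).mpr hgi
    exact this
  have bound2 := halfline s hs (fun x => f (-x)) (fun y => g (-y)) hmfneg hmgneg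
    (fun t => hf (-t)) (fun t => hg (-t)) hfnegint.integrableOn hgnegint.integrableOn
    (fun x y _ _ => by simpa [neg_mul_neg] using hdual (-x) (-y))
  rw [integral_comp_neg_Ioi, integral_comp_neg_Ioi, neg_zero] at bound2
  -- splitting the integrals
  have hFsplit : (∫ t in Iic (0:ℝ), f t) + ∫ t in Ioi (0:ℝ), f t = ∫ t, f t :=
    intervalIntegral.integral_Iic_add_Ioi hint.integrableOn hint.integrableOn
  have hGsplit : (∫ t in Iic (0:ℝ), g t) + ∫ t in Ioi (0:ℝ), g t = ∫ t, g t :=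
    intervalIntegral.integral_Iic_add_Ioi hgi.integrableOn hgi.integrableOn
  have hFp : ∫ t in Ioi (0:ℝ), f t = l * ∫ t, f t := by
    rw [← integral_Ici_eq_integral_Ioi]; exact hlf
  have hFm : ∫ t in Iic (0:ℝ), f t = (1 - l) * ∫ t, f t := by
    have := hFsplit
    rw [hFp] at this
    linarith
  set F : ℝ := ∫ t, f t with hF
  set Gp : ℝ := ∫ t in Ioi (0:ℝ), g t with hGp
  set Gm : ℝ := ∫ t in Iic (0:ℝ), g t with hGm
  rw [hFp] at bound1
  rw [hFm] at bound2
  have hF0 : 0 ≤ F := integral_nonneg hf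
  have hGp0 : 0 ≤ Gp := setIntegral_nonneg measurableSet_Ioi (fun t _ => hg t)
  have hGm0 : 0 ≤ Gm := setIntegral_nonneg measurableSet_Iic (fun t _ => hg t)
  have hKp' : Kp = ∫ z in Ioi (0:ℝ), max (1 - z ^ 2) 0 ^ (s / 2) := hKp
  rw [← hKp'] at bound1 bound2
  rw [hK, ← hGsplit]
  rw [le_div_iff₀ hden]
  nlinarith [mul_le_mul_of_nonneg_left bound1 (by linarith : (0:ℝ) ≤ 4 * (1 - l)),
    mul_le_mul_of_nonneg_left bound2 (by linarith : (0:ℝ) ≤ 4 * l),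
    mul_nonneg hF0 hGp0, mul_nonneg hF0 hGm0, sq_nonneg Kp]
end
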